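/- arXiv:1908.11576 — 13 statements merged into one kernel-verified Lean document; each statement's English description precedes it below -/
import Mathlib

section
/- Let T : ℝⁿ → ℝⁿ be linear and α-averaged for some α ∈ (0,1). Then the operator norm of T composed with the orthogonal projection onto (Fix T)^⊥ is strictly less than 1, i.e., ‖T ∘ P_{(Fix T)^⊥}‖ < 1. -/
/-- If `T : ℝⁿ → ℝⁿ` is linear and `α`-averaged with `α ∈ (0,1)`, then
`‖T ∘ P_{(Fix T)ᗮ}‖ < 1`. -/
theorem stmt1 {n : ℕ}
    (T : EuclideanSpace ℝ (Fin n) →L[ℝ] EuclideanSpace ℝ (Fin n))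
    (α : ℝ) (hα : α ∈ Set.Ioo (0 : ℝ) 1)
    (hav : ∃ R : EuclideanSpace ℝ (Fin n) → EuclideanSpace ℝ (Fin n),
      (∀ u v, ‖R u - R v‖ ≤ ‖u - v‖) ∧ ∀ u, T u = (1 - α) • u + α • R u)
    (F : Submodule ℝ (EuclideanSpace ℝ (Fin n)))
    (hF : ∀ u, u ∈ F ↔ T u = u) :
    ‖T.comp (Fᗮ.subtypeL.comp (Submodule.orthogonalProjectionOnto Fᗮ))‖ < 1 := by
  obtain ⟨R, hR, hTR⟩ := hav
  obtain ⟨hα0, hα1⟩ := hα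
  have hR0 : R 0 = 0 := by
    have h0 : T 0 = 0 := map_zero T
    have h := hTR 0
    rw [h0, smul_zero, zero_add] at h
    have : α • R 0 = 0 := h.symm
    simpa [smul_eq_zero, ne_of_gt hα0] using this
  have hRle : ∀ u, ‖R u‖ ≤ ‖u‖ := by
    intro u
    have := hR u 0
    simpa [hR0] using this
  have key : ∀ u, ‖T u‖ ^ 2 + α * (1 - α) * ‖u - R u‖ ^ 2 ≤ ‖u‖ ^ 2 := by
    intro u
    rw [hTR u]
    have e1 : ‖(1 - α) • u + α • R u‖ ^ 2
        = ((1-α) * ‖u‖)^2 + 2 * ((1-α) * α * inner ℝ u (R u)) + (α * ‖R u‖)^2 := by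
      rw [@norm_add_sq_real, norm_smul, norm_smul, real_inner_smul_left,
        real_inner_smul_right, Real.norm_eq_abs, Real.norm_eq_abs,
        abs_of_pos hα0, abs_of_pos (by linarith : (0:ℝ) < 1 - α)]
      ring
    have e2 : ‖u - R u‖ ^ 2 = ‖u‖^2 - 2 * inner ℝ u (R u) + ‖R u‖^2 := by
      rw [@norm_sub_sq_real]
    rw [e1, e2]
    nlinarith [mul_le_mul (hRle u) (hRle u) (norm_nonneg (R u)) (norm_nonneg u)]
  have nonexp : ∀ u, ‖T u‖ ≤ ‖u‖ := by
    intro u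
    have h := key u
    nlinarith [norm_nonneg (T u), norm_nonneg u, sq_nonneg (‖u - R u‖),
      mul_pos hα0 (by linarith : (0:ℝ) < 1 - α)]
  have fixchar : ∀ u, ‖T u‖ = ‖u‖ → T u = u := by
    intro u hu
    have h := key u
    rw [hu] at h
    have hpos : 0 < α * (1 - α) := mul_pos hα0 (by linarith)
    have hsq : ‖u - R u‖ ^ 2 ≤ 0 := by nlinarith
    have hz : ‖u - R u‖ = 0 := by
      have := sq_nonneg ‖u - R u‖
      nlinarith [norm_nonneg (u - R u)]
    have huR : R u = u := (sub_eq_zero.mp (norm_eq_zero.mp hz)).symm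
    rw [hTR u, huR, ← add_smul]
    simp
  set S := T.comp (Fᗮ.subtypeL.comp (Submodule.orthogonalProjectionOnto Fᗮ)) with hS
  have hSapp : ∀ u, S u = T (Submodule.orthogonalProjectionOnto Fᗮ u : EuclideanSpace ℝ (Fin n)) := by
    intro u; rfl
  -- pointwise strict bound on the unit sphere
  have sphere_lt : ∀ x : EuclideanSpace ℝ (Fin n), ‖x‖ = 1 → ‖S x‖ < 1 := by
    intro x hx
    set p := (Submodule.orthogonalProjectionOnto Fᗮ x : EuclideanSpace ℝ (Fin n)) with hp
    have hple : ‖p‖ ≤ 1 := by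
      have hpy := Submodule.norm_sq_eq_add_norm_sq_projection x Fᗮ
      have hco : ‖p‖ = ‖(Submodule.orthogonalProjectionOnto Fᗮ) x‖ := rfl
      have h2 : ‖p‖ ^ 2 ≤ ‖x‖ ^ 2 := by
        rw [hco, hpy]; nlinarith [sq_nonneg ‖(Submodule.orthogonalProjectionOnto Fᗮᗮ) x‖]
      nlinarith [norm_nonneg p]
    have hTp : ‖S x‖ ≤ ‖p‖ := by rw [hSapp]; exact nonexp p
    by_contra hge
    push_neg at hge
    have h1 : ‖S x‖ = ‖p‖ := le_antisymm hTp (by linarith)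
    have hfix : T p = p := fixchar p h1
    have hpF : p ∈ F := (hF p).mpr hfix
    have hpFo : p ∈ Fᗮ := (Submodule.orthogonalProjectionOnto Fᗮ x).2
    have hip : (inner ℝ p p : ℝ) = 0 := hpFo p hpF
    have hp0 : p = 0 := by rwa [inner_self_eq_zero] at hip
    rw [hp0, norm_zero] at h1
    linarith
  by_contra hcon
  push_neg at hcon
  have hS1 : (1 : ℝ) ≤ ‖S‖ := hcon
  -- S ≠ 0, so the space is nontrivial
  have hSne : S ≠ 0 := by
    intro h0
    rw [h0, norm_zero] at hS1
    linarith
  obtain ⟨u, hu⟩ : ∃ u, S u ≠ 0 := by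
    by_contra h
    push_neg at h
    exact hSne (ContinuousLinearMap.ext fun u => by simp [h u])
  have hu0 : u ≠ 0 := fun h => hu (by simp [h])
  have : Nontrivial (EuclideanSpace ℝ (Fin n)) := ⟨⟨u, 0, hu0⟩⟩
  obtain ⟨x, hxs, hxmax⟩ := (isCompact_sphere (0 : EuclideanSpace ℝ (Fin n)) 1).exists_isMaxOn
    (NormedSpace.sphere_nonempty.mpr zero_le_one)
    (continuous_norm.comp S.continuous).continuousOn
  have hx1 : ‖x‖ = 1 := by simpa using mem_sphere_zero_iff_norm.mp hxs
  have hnorm_le : ‖S‖ ≤ ‖S x‖ := by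
    apply ContinuousLinearMap.opNorm_le_bound _ (norm_nonneg _)
    intro v
    rcases eq_or_ne v 0 with rfl | hv
    · simp
    · have hvn : ‖v‖ ≠ 0 := norm_ne_zero_iff.mpr hv
      have hmem : ‖v‖⁻¹ • v ∈ Metric.sphere (0 : EuclideanSpace ℝ (Fin n)) 1 := by
        simp [mem_sphere_zero_iff_norm, norm_smul, abs_of_nonneg (inv_nonneg.mpr (norm_nonneg v)),
          inv_mul_cancel₀ hvn]
      have h3 := hxmax hmem
      have this : ‖v‖⁻¹ * ‖S v‖ ≤ ‖S x‖ := by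
        simpa [Function.comp, map_smul, norm_smul, abs_of_nonneg (norm_nonneg v)] using h3
      calc ‖S v‖ = ‖v‖ * (‖v‖⁻¹ * ‖S v‖) := by field_simp
        _ ≤ ‖v‖ * ‖S x‖ := by
            apply mul_le_mul_of_nonneg_left _ (norm_nonneg v)
            linarith [this]
        _ = ‖S x‖ * ‖v‖ := mul_comm _ _
  have := sphere_lt x hx1
  linarith
end

section
/- Let U and V be closed linear subspaces of a real Hilbert space H, let T = T_{V,U} be the Douglas–Rachford operator, and let x ∈ H. Then P_{U∩V}(x) = P_{Fix T}(x) if and only if x belongs to the closure of U + V. -/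
set_option maxHeartbeats 1000000 in
set_option synthInstance.maxHeartbeats 400000 in
/-- For closed linear subspaces `U, V` and the Douglas–Rachford operator
`T = T_{V,U}`, one has `P_{U ⊓ V} x = P_{Fix T} x` iff `x ∈ closure (U + V)`. -/
theorem stmt5 {H : Type*} [NormedAddCommGroup H] [InnerProductSpace ℝ H]
    [CompleteSpace H]
    (U V : Submodule ℝ H)
    (hUc : IsClosed (U : Set H)) (hVc : IsClosed (V : Set H))
    [Submodule.HasOrthogonalProjection U] [Submodule.HasOrthogonalProjection V]
    [Submodule.HasOrthogonalProjection (U ⊓ V)]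
    (T : H → H)
    (hT : ∀ y, T y =
      (Submodule.orthogonalProjectionOnto V ((2 : ℝ) • (Submodule.orthogonalProjectionOnto U y : H) - y) : H)
        + y - (Submodule.orthogonalProjectionOnto U y : H))
    (F : Submodule ℝ H) (hF : ∀ y, y ∈ F ↔ T y = y) [Submodule.HasOrthogonalProjection F]
    (x : H) :
    (Submodule.orthogonalProjectionOnto (U ⊓ V) x : H) = (Submodule.orthogonalProjectionOnto F x : H)
      ↔ x ∈ closure ((U ⊔ V : Submodule ℝ H) : Set H) := by
  haveI hWproj : Submodule.HasOrthogonalProjection (U ⊔ V)ᗮ := by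
    haveI : CompleteSpace ((U ⊔ V)ᗮ : Submodule ℝ H) :=
      (Submodule.isClosed_orthogonal _).completeSpace_coe
    infer_instance
  set W : Submodule ℝ H := (U ⊔ V)ᗮ with hW
  set a : H := (Submodule.orthogonalProjectionOnto (U ⊓ V) x : H) with ha
  set b : H := (Submodule.orthogonalProjectionOnto W x : H) with hb
  have haUV : a ∈ U ⊓ V := (Submodule.orthogonalProjectionOnto (U ⊓ V) x).2
  have hbW : b ∈ W := (Submodule.orthogonalProjectionOnto W x).2
  have hWU : W ≤ Uᗮ := Submodule.orthogonal_le le_sup_left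
  have hWV : W ≤ Vᗮ := Submodule.orthogonal_le le_sup_right
  -- a + b is a fixed point of T
  have hPUab : (Submodule.orthogonalProjectionOnto U (a + b) : H) = a :=
    Submodule.eq_starProjection_of_mem_orthogonal' haUV.1 (hWU hbW) rfl
  have habF : a + b ∈ F := by
    rw [hF, hT, hPUab]
    have h2 : (2 : ℝ) • a - (a + b) = a + (-b) := by
      rw [two_smul]; abel
    rw [h2]
    have hPV : (Submodule.orthogonalProjectionOnto V (a + -b) : H) = a :=
      Submodule.eq_starProjection_of_mem_orthogonal' haUV.2 (neg_mem (hWV hbW)) rfl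
    rw [hPV]; abel
  -- every element of F decomposes as (U⊓V) part + W part
  have hFdecomp : ∀ w ∈ F, (Submodule.orthogonalProjectionOnto U w : H) ∈ U ⊓ V ∧
      w - (Submodule.orthogonalProjectionOnto U w : H) ∈ W := by
    intro w hw
    rw [hF, hT] at hw
    set u : H := (Submodule.orthogonalProjectionOnto U w : H) with hu
    have hPV : (Submodule.orthogonalProjectionOnto V ((2:ℝ) • u - w) : H) = u := by
      have h := hw
      rw [add_sub_assoc] at h
      have h2 := eq_sub_of_add_eq h
      rwa [sub_sub_cancel] at h2
    have huV : u ∈ V := hPV ▸ (Submodule.orthogonalProjectionOnto V ((2:ℝ) • u - w)).2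
    have hsub : ((2:ℝ) • u - w) - (Submodule.orthogonalProjectionOnto V ((2:ℝ) • u - w) : H) ∈ Vᗮ :=
      Submodule.sub_starProjection_mem_orthogonal _
    rw [hPV] at hsub
    have huw : u - w ∈ Vᗮ := by
      have heq : (2:ℝ) • u - w - u = u - w := by rw [two_smul]; abel
      rwa [heq] at hsub
    have huwU : w - u ∈ Uᗮ := Submodule.sub_starProjection_mem_orthogonal w
    have huwV : w - u ∈ Vᗮ := by
      have hn := neg_mem huw; rwa [neg_sub] at hn
    refine ⟨⟨(Submodule.orthogonalProjectionOnto U w).2, huV⟩, ?_⟩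
    rw [hW, ← Submodule.inf_orthogonal]
    exact ⟨huwU, huwV⟩
  -- P_F x = a + b
  have hPF : (Submodule.orthogonalProjectionOnto F x : H) = a + b := by
    apply Submodule.eq_starProjection_of_mem_of_inner_eq_zero habF
    intro w hw
    obtain ⟨huUV, huW⟩ := hFdecomp w hw
    set u : H := (Submodule.orthogonalProjectionOnto U w : H)
    have hxa : x - a ∈ (U ⊓ V)ᗮ := Submodule.sub_starProjection_mem_orthogonal x
    have hxb : x - b ∈ Wᗮ := Submodule.sub_starProjection_mem_orthogonal x
    have h1 : (inner ℝ (x - a) u : ℝ) = 0 := by rw [real_inner_comm]; exact hxa u huUV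
    have h2 : (inner ℝ b u : ℝ) = 0 := by
      have hm : u ∈ U ⊔ V := le_sup_left (α := Submodule ℝ H) huUV.1
      rw [real_inner_comm]; exact hbW u hm
    have h3 : (inner ℝ (x - b) (w - u) : ℝ) = 0 := by rw [real_inner_comm]; exact hxb _ huW
    have h4 : (inner ℝ a (w - u) : ℝ) = 0 := by
      have haUVmem : a ∈ U ⊔ V := le_sup_left (α := Submodule ℝ H) haUV.1
      rw [real_inner_comm]; exact (Submodule.mem_orthogonal' _ _).1 huW a haUVmem
    have hrw : x - (a + b) = (x - a - b) := by abel
    rw [hrw]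
    have hw' : w = u + (w - u) := by abel
    rw [hw', inner_add_right]
    have e1 : (inner ℝ (x - a - b) u : ℝ) = (inner ℝ (x - a) u : ℝ) - (inner ℝ b u : ℝ) := by
      rw [← inner_sub_left]
    have e2 : (inner ℝ (x - a - b) (w - u) : ℝ)
        = (inner ℝ (x - b) (w - u) : ℝ) - (inner ℝ a (w - u) : ℝ) := by
      rw [← inner_sub_left]; congr 1; abel
    rw [e1, e2, h1, h2, h3, h4]; ring
  rw [hPF]
  have hclos : ∀ y : H, y ∈ Wᗮ ↔ y ∈ closure ((U ⊔ V : Submodule ℝ H) : Set H) := by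
    intro y
    rw [hW, Submodule.orthogonal_orthogonal_eq_closure]
    exact Iff.rfl
  constructor
  · intro h
    have hb0 : b = 0 := by
      have h' := h.symm
      rwa [add_eq_left] at h'
    have hz : Submodule.orthogonalProjectionOnto W x = 0 := by
      ext; simpa [hb] using hb0
    exact (hclos x).1 (Submodule.orthogonalProjectionOnto_eq_zero_iff.mp hz)
  · intro h
    have hx : x ∈ Wᗮ := (hclos x).2 h
    have hz := Submodule.orthogonalProjectionOnto_eq_zero_iff.mpr hx
    have hb0 : b = 0 := by rw [hb, hz]; rfl
    rw [hb0, add_zero]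
end

section
/- Let U and V be closed linear subspaces of a real Hilbert space H, let T = T_{V,U} be the Douglas–Rachford operator, and let K be a closed linear subspace with U ∩ V ⊆ K ⊆ closure(U + V). Then for every x ∈ H, P_{Fix T}(P_K x) = P_{U∩V}(P_K x) = P_{U∩V}(x). -/
/-- For closed linear subspaces `U, V`, the Douglas–Rachford operator `T`,
and a closed linear subspace `K` with `U ⊓ V ⊆ K ⊆ closure (U + V)`, one has
`P_{Fix T} (P_K x) = P_{U ⊓ V} (P_K x) = P_{U ⊓ V} x` for all `x`. -/
theorem stmt6 {H : Type*} [NormedAddCommGroup H] [InnerProductSpace ℝ H]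
    [CompleteSpace H]
    (U V : Submodule ℝ H)
    (hUc : IsClosed (U : Set H)) (hVc : IsClosed (V : Set H))
    [Submodule.HasOrthogonalProjection U] [Submodule.HasOrthogonalProjection V]
    [Submodule.HasOrthogonalProjection (U ⊓ V)]
    (T : H → H)
    (hT : ∀ y, T y =
      (Submodule.orthogonalProjectionOnto V ((2 : ℝ) • (Submodule.orthogonalProjectionOnto U y : H) - y) : H)
        + y - (Submodule.orthogonalProjectionOnto U y : H))
    (F : Submodule ℝ H) (hF : ∀ y, y ∈ F ↔ T y = y) [Submodule.HasOrthogonalProjection F]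
    (K : Submodule ℝ H) (hKc : IsClosed (K : Set H)) [Submodule.HasOrthogonalProjection K]
    (hUVK : U ⊓ V ≤ K)
    (hKUV : (K : Set H) ⊆ closure ((U ⊔ V : Submodule ℝ H) : Set H))
    (x : H) :
    (Submodule.orthogonalProjectionOnto F (Submodule.orthogonalProjectionOnto K x : H) : H)
        = (Submodule.orthogonalProjectionOnto (U ⊓ V) (Submodule.orthogonalProjectionOnto K x : H) : H) ∧
    (Submodule.orthogonalProjectionOnto (U ⊓ V) (Submodule.orthogonalProjectionOnto K x : H) : H)
        = (Submodule.orthogonalProjectionOnto (U ⊓ V) x : H) := by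
  set y : H := (Submodule.orthogonalProjectionOnto K x : H) with hy
  set z : H := (Submodule.orthogonalProjectionOnto (U ⊓ V) y : H) with hz
  have hzmem : z ∈ U ⊓ V := (Submodule.orthogonalProjectionOnto (U ⊓ V) y).2
  constructor
  · -- first equality : P_F y = z
    refine Submodule.eq_starProjection_of_mem_of_inner_eq_zero ?_ ?_
    · -- z ∈ F
      rw [hF]
      have hzU : (Submodule.orthogonalProjectionOnto U z : H) = z :=
        Submodule.starProjection_eq_self_iff.mpr hzmem.1
      have hzV : (Submodule.orthogonalProjectionOnto V z : H) = z :=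
        Submodule.starProjection_eq_self_iff.mpr hzmem.2
      rw [hT, hzU]
      have h2z : (2 : ℝ) • z - z = z := by rw [two_smul]; abel
      rw [h2z, hzV]; abel
    · intro w hw
      -- decompose w = a + (w - a) with a ∈ U ⊓ V, w - a ∈ Uᗮ ⊓ Vᗮ
      set a : H := (Submodule.orthogonalProjectionOnto U w : H) with ha
      have hTw : T w = w := (hF w).1 hw
      have heq : (Submodule.orthogonalProjectionOnto V ((2 : ℝ) • a - w) : H) + w - a = w :=
        (hT w).symm.trans hTw
      have hPV : (Submodule.orthogonalProjectionOnto V ((2 : ℝ) • a - w) : H) = a := by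
        have hc : (Submodule.orthogonalProjectionOnto V ((2 : ℝ) • a - w) : H) = w - (w - a) := by
          rw [eq_sub_iff_add_eq, ← add_sub_assoc, heq]
        rwa [sub_sub_cancel] at hc
      have haU : a ∈ U := (Submodule.orthogonalProjectionOnto U w).2
      have haV : a ∈ V := hPV ▸ (Submodule.orthogonalProjectionOnto V ((2 : ℝ) • a - w)).2
      have hbU : w - a ∈ Uᗮ := Submodule.sub_starProjection_mem_orthogonal w
      have hbV : w - a ∈ Vᗮ := by
        have h3 : (2 : ℝ) • a - w - (Submodule.orthogonalProjectionOnto V ((2 : ℝ) • a - w) : H) ∈ Vᗮ :=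
          Submodule.sub_starProjection_mem_orthogonal (K := V) ((2 : ℝ) • a - w)
        rw [hPV] at h3
        have h4 := Vᗮ.neg_mem h3
        have h5 : -((2 : ℝ) • a - w - a) = w - a := by rw [two_smul]; abel
        rwa [h5] at h4
      have hbUV : w - a ∈ (U ⊔ V)ᗮ := by
        rw [← Submodule.inf_orthogonal]; exact ⟨hbU, hbV⟩
      have hyz : y - z ∈ (U ⊓ V)ᗮ := Submodule.sub_starProjection_mem_orthogonal y
      have h1 : inner ℝ (y - z) a = (0 : ℝ) :=
        Submodule.inner_left_of_mem_orthogonal (Submodule.mem_inf.mpr ⟨haU, haV⟩) hyz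
      have hyc : y ∈ closure ((U ⊔ V : Submodule ℝ H) : Set H) :=
        hKUV (Submodule.orthogonalProjectionOnto K x).2
      have h2 : inner ℝ y (w - a) = (0 : ℝ) := by
        have hclosed : IsClosed {u : H | inner ℝ u (w - a) = (0 : ℝ)} :=
          isClosed_eq (Continuous.inner continuous_id continuous_const) continuous_const
        exact closure_minimal
          (fun u hu => Submodule.inner_right_of_mem_orthogonal hu hbUV) hclosed hyc
      have h3 : inner ℝ z (w - a) = (0 : ℝ) :=
        Submodule.inner_right_of_mem_orthogonal hzmem.1 hbU
      have hw' : w = a + (w - a) := by abel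
      rw [inner_sub_left] at h1
      rw [hw', inner_add_right, inner_sub_left, inner_sub_left]
      linarith
  · -- second equality
    have hxy : x - y ∈ (U ⊓ V)ᗮ :=
      Submodule.orthogonal_le hUVK (Submodule.sub_starProjection_mem_orthogonal x)
    have h0 : (Submodule.orthogonalProjectionOnto (U ⊓ V) (x - y) : H) = 0 := by
      simpa using congrArg Subtype.val
        (Submodule.orthogonalProjectionOnto_apply_of_mem_orthogonal hxy)
    have h2 := congrArg Subtype.val (map_sub (Submodule.orthogonalProjectionOnto (U ⊓ V)) x y)
    simp only [Submodule.coe_sub] at h2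
    rw [h0] at h2
    exact (sub_eq_zero.mp h2.symm).symm
end

section
/- Let T₁, …, Tₘ be isometries on a real Hilbert space H with ∩ⱼ Fix Tⱼ ≠ ∅, and let S(x) = {T₁x, …, Tₘx}. Then for every z ∈ ∩ⱼ Fix Tⱼ and every x ∈ H, the point p := P_{aff S(x)}(z) lies in aff S(x), and the set {‖p − Tx‖ : T ∈ S} is a singleton, i.e., p is equidistant from all points of S(x). -/
/-- For isometries `T₁, …, Tₘ` with common fixed point `z` and any `x`, the
projection `p` of `z` onto the affine hull `M` of `S(x) = {T₁x, …, Tₘx}`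
lies in `M` and is equidistant from all points `Tᵢ x`. -/
theorem stmt8 {H : Type*} [NormedAddCommGroup H] [InnerProductSpace ℝ H]
    [CompleteSpace H] {m : ℕ}
    (T : Fin m → H → H) (hiso : ∀ i, Isometry (T i))
    (z : H) (hz : ∀ i, T i z = z) (x : H)
    (M : AffineSubspace ℝ H)
    (hM : M = affineSpan ℝ (Set.range fun i => T i x))
    [Nonempty M] [Submodule.HasOrthogonalProjection M.direction] :
    (EuclideanGeometry.orthogonalProjection M z : H) ∈ M ∧
    ∀ i j : Fin m,
      ‖(EuclideanGeometry.orthogonalProjection M z : H) - T i x‖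
        = ‖(EuclideanGeometry.orthogonalProjection M z : H) - T j x‖ := by
  set p : H := (EuclideanGeometry.orthogonalProjection M z : H) with hp
  have hmem : ∀ i : Fin m, T i x ∈ M := by
    intro i
    rw [hM]
    exact subset_affineSpan ℝ _ ⟨i, rfl⟩
  have key : ∀ i : Fin m, ‖p - T i x‖ * ‖p - T i x‖
      = ‖z - x‖ * ‖z - x‖ - dist z p * dist z p := by
    intro i
    have h := EuclideanGeometry.dist_sq_eq_dist_orthogonalProjection_sq_add_dist_orthogonalProjection_sq
      (s := M) z (hmem i)
    have hzx : dist (T i x) z = ‖z - x‖ := by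
      conv_lhs => rw [← hz i]
      rw [(hiso i).dist_eq, dist_eq_norm, norm_sub_rev]
    have hd : dist (T i x) p = ‖p - T i x‖ := by rw [dist_eq_norm, norm_sub_rev]
    rw [hzx, hd, ← hp] at h
    linarith
  refine ⟨(EuclideanGeometry.orthogonalProjection M z).2, fun i j => ?_⟩
  have h := (key i).trans (key j).symm
  exact (mul_self_inj (norm_nonneg _) (norm_nonneg _)).mp h
end

section
/- Let S = {T₁, …, Tₘ} be isometries on a real Hilbert space H with ∩ⱼ Fix Tⱼ ≠ ∅, and suppose the circumcenter mapping CC_S is proper. For any z ∈ ∩ⱼ Fix Tⱼ, any x ∈ H, and any map F : H → H with F(y) ∈ aff(S(y)) for all y, one has ‖z − CC_S x‖² + ‖CC_S x − Fx‖² = ‖z − Fx‖². -/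
/-- Pythagorean identity for the circumcenter mapping induced by isometries:
`‖z − CC_S x‖² + ‖CC_S x − Fx‖² = ‖z − Fx‖²` whenever `z` is a common fixed
point and `F(y) ∈ aff S(y)` for all `y`. -/
theorem stmt9 {H : Type*} [NormedAddCommGroup H] [InnerProductSpace ℝ H]
    [CompleteSpace H] {m : ℕ}
    (T : Fin m → H → H) (hiso : ∀ i, Isometry (T i))
    (CC : H → H)
    (hCC1 : ∀ y, CC y ∈ affineSpan ℝ (Set.range fun i => T i y))
    (hCC2 : ∀ y (i j : Fin m), ‖CC y - T i y‖ = ‖CC y - T j y‖)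
    (hCC3 : ∀ y p, p ∈ affineSpan ℝ (Set.range fun i => T i y) →
      (∀ i j : Fin m, ‖p - T i y‖ = ‖p - T j y‖) → p = CC y)
    (z : H) (hz : ∀ i, T i z = z)
    (F : H → H) (hFy : ∀ y, F y ∈ affineSpan ℝ (Set.range fun i => T i y))
    (x : H) :
    ‖z - CC x‖ ^ 2 + ‖CC x - F x‖ ^ 2 = ‖z - F x‖ ^ 2 := by
  -- z is equidistant from all T i x
  have hzd : ∀ i : Fin m, ‖z - T i x‖ = ‖z - x‖ := by
    intro i
    have := (hiso i).dist_eq z x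
    rw [hz i] at this
    simpa [dist_eq_norm] using this
  -- orthogonality of z - CC x to differences
  have key : ∀ i j : Fin m, (inner ℝ (z - CC x) (T i x - T j x) : ℝ) = 0 := by
    intro i j
    have h1 : ‖z - T i x‖ ^ 2 = ‖z - T j x‖ ^ 2 := by rw [hzd i, hzd j]
    have h2 : ‖CC x - T i x‖ ^ 2 = ‖CC x - T j x‖ ^ 2 := by rw [hCC2 x i j]
    have e1 : ∀ a b : H, ‖a - b‖ ^ 2 = ‖a‖ ^ 2 - 2 * inner ℝ a b + ‖b‖ ^ 2 := by
      intro a b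
      rw [@norm_sub_sq_real]
    rw [e1, e1] at h1 h2
    simp only [inner_sub_left, inner_sub_right]
    linarith
  -- CC x - F x lies in the direction of the affine span
  have hdir : CC x - F x ∈ (affineSpan ℝ (Set.range fun i => T i x)).direction := by
    have := AffineSubspace.vsub_mem_direction (hCC1 x) (hFy x)
    simpa using this
  rw [direction_affineSpan] at hdir
  have horth : (inner ℝ (z - CC x) (CC x - F x) : ℝ) = 0 := by
    have : ∀ v ∈ vectorSpan ℝ (Set.range fun i => T i x),
        (inner ℝ (z - CC x) v : ℝ) = 0 := by
      intro v hv
      induction hv using Submodule.span_induction with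
      | mem w hw =>
        obtain ⟨a, ha, b, hb, rfl⟩ := hw
        obtain ⟨i, rfl⟩ := ha
        obtain ⟨j, rfl⟩ := hb
        simpa using key i j
      | zero => simp
      | add a b _ _ ha hb => rw [inner_add_right, ha, hb]; ring
      | smul c a _ ha => rw [real_inner_smul_right, ha]; ring
    exact this _ hdir
  have : ‖z - F x‖ ^ 2 = ‖(z - CC x) + (CC x - F x)‖ ^ 2 := by rw [sub_add_sub_cancel]
  rw [this, norm_add_sq_real, horth]
  ring
end

section
/- Let S = {T₁, …, Tₘ} be linear isometries on a real Hilbert space H with ∩ⱼ Fix Tⱼ ≠ ∅. Then the circumcenter mapping CC_S is homogeneous: CC_S(λx) = λ CC_S(x) for all x ∈ H and λ ∈ ℝ; and it is a quasitranslation: CC_S(x + z) = CC_S(x) + z for all x ∈ H and z ∈ ∩ⱼ Fix Tⱼ. -/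
/-- For linear isometries `T₁, …, Tₘ` with a common fixed point, the
circumcenter mapping is homogeneous and a quasitranslation. -/
theorem stmt10 {H : Type*} [NormedAddCommGroup H] [InnerProductSpace ℝ H]
    [CompleteSpace H] {m : ℕ}
    (T : Fin m → H →ₗ[ℝ] H) (hiso : ∀ i, Isometry (T i))
    (z₀ : H) (hz₀ : ∀ i, T i z₀ = z₀)
    (CC : H → H)
    (hCC1 : ∀ y, CC y ∈ affineSpan ℝ (Set.range fun i => T i y))
    (hCC2 : ∀ y (i j : Fin m), ‖CC y - T i y‖ = ‖CC y - T j y‖)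
    (hCC3 : ∀ y p, p ∈ affineSpan ℝ (Set.range fun i => T i y) →
      (∀ i j : Fin m, ‖p - T i y‖ = ‖p - T j y‖) → p = CC y) :
    (∀ (x : H) (lam : ℝ), CC (lam • x) = lam • CC x) ∧
    (∀ (x z : H), (∀ i, T i z = z) → CC (x + z) = CC x + z) := by
  constructor
  · intro x lam
    symm
    have hT : (fun i => T i (lam • x)) = fun i => lam • T i x := by
      funext i; exact (T i).map_smul lam x
    apply hCC3
    · rw [hT]
      let f : H →ᵃ[ℝ] H := (lam • (LinearMap.id : H →ₗ[ℝ] H)).toAffineMap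
      have hmem : f (CC x) ∈ (affineSpan ℝ (Set.range fun i => T i x)).map f :=
        AffineSubspace.mem_map_of_mem f (hCC1 x)
      rw [AffineSubspace.map_span] at hmem
      have : f '' (Set.range fun i => T i x) = Set.range fun i => lam • T i x := by
        rw [← Set.range_comp]
        rfl
      rw [this] at hmem
      exact hmem
    · intro i j
      rw [(T i).map_smul, (T j).map_smul]
      simp only [← smul_sub, norm_smul]
      rw [hCC2 x i j]
  · intro x z hz
    symm
    have hT : (fun i => T i (x + z)) = fun i => T i x + z := by
      funext i; rw [map_add, hz i]
    apply hCC3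
    · rw [hT]
      let f : H →ᵃ[ℝ] H := (AffineEquiv.constVAdd ℝ H z : H ≃ᵃ[ℝ] H).toAffineMap
      have hmem : f (CC x) ∈ (affineSpan ℝ (Set.range fun i => T i x)).map f :=
        AffineSubspace.mem_map_of_mem f (hCC1 x)
      rw [AffineSubspace.map_span] at hmem
      have hcomp : (⇑f ∘ fun i => T i x) = fun i => T i x + z := by
        funext i
        simp [f, add_comm]
      rw [← Set.range_comp, hcomp] at hmem
      have : f (CC x) = CC x + z := by simp [f, add_comm]
      rwa [this] at hmem
    · intro i j
      rw [map_add, map_add, hz i, hz j]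
      simp only [add_sub_add_right_eq_sub]
      exact hCC2 x i j
end

section
/- Let S = {T₁, …, Tₘ} be isometries on a real Hilbert space H with ∩ⱼ Fix Tⱼ ≠ ∅, and let x ∈ H. Then the sequence (CC_S^k x)_{k∈ℕ} is Fejér monotone with respect to ∩ⱼ Fix Tⱼ; in particular, for each z ∈ ∩ⱼ Fix Tⱼ the limit lim_k ‖CC_S^k x − z‖ exists and the sequence (CC_S^k x) is bounded. -/
/-- The circumcentered isometry method is Fejér monotone with respect to the
common fixed point set; in particular `lim_k ‖CC^k x − z‖` exists for every
common fixed point `z`, and the sequence of iterates is bounded. -/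
theorem stmt11 {H : Type*} [NormedAddCommGroup H] [InnerProductSpace ℝ H]
    [CompleteSpace H] {m : ℕ}
    (T : Fin m → H → H) (hiso : ∀ i, Isometry (T i))
    (z₀ : H) (hz₀ : ∀ i, T i z₀ = z₀)
    (CC : H → H)
    (hCC1 : ∀ y, CC y ∈ affineSpan ℝ (Set.range fun i => T i y))
    (hCC2 : ∀ y (i j : Fin m), ‖CC y - T i y‖ = ‖CC y - T j y‖)
    (hCC3 : ∀ y p, p ∈ affineSpan ℝ (Set.range fun i => T i y) →
      (∀ i j : Fin m, ‖p - T i y‖ = ‖p - T j y‖) → p = CC y)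
    (x : H) :
    (∀ z, (∀ i, T i z = z) → ∀ k : ℕ, ‖CC^[k + 1] x - z‖ ≤ ‖CC^[k] x - z‖) ∧
    (∀ z, (∀ i, T i z = z) → ∃ L : ℝ,
      Filter.Tendsto (fun k : ℕ => ‖CC^[k] x - z‖) Filter.atTop (nhds L)) ∧
    Bornology.IsBounded (Set.range fun k : ℕ => CC^[k] x) := by
  -- the key contraction property of the circumcenter
  have key : ∀ z : H, (∀ i, T i z = z) → ∀ y : H, ‖CC y - z‖ ≤ ‖y - z‖ := by
    intro z hz y
    rcases Nat.eq_zero_or_pos m with hm | hm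
    · exfalso
      have h1 := hCC1 y
      have : (Set.range fun i : Fin m => T i y) = ∅ := by
        subst hm; simp
      rw [this, AffineSubspace.span_empty] at h1
      exact h1
    have i0 : Fin m := ⟨0, hm⟩
    obtain ⟨w, hw, hc⟩ := eq_affineCombination_of_mem_affineSpan_of_fintype (hCC1 y)
    rw [Finset.affineCombination_eq_linear_combination _ _ _ hw] at hc
    set c := CC y with hcdef
    -- all points T i y are at distance ‖y - z‖ from z
    have hr : ∀ i, ‖T i y - z‖ = ‖y - z‖ := by
      intro i
      have := (hiso i).dist_eq y z
      rw [hz i] at this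
      simpa [dist_eq_norm] using this
    -- all points T i y are at common distance ρ from c
    set ρ := ‖c - T i0 y‖ with hρ
    have hρi : ∀ i, ‖c - T i y‖ = ρ := fun i => hCC2 y i i0
    -- c - z = ∑ w i • (T i y - z)
    have hcz : c - z = ∑ i, w i • (T i y - z) := by
      rw [hc]
      rw [Finset.sum_congr rfl (fun i _ => smul_sub (w i) (T i y) z)]
      rw [Finset.sum_sub_distrib, ← Finset.sum_smul, hw, one_smul]
    -- each inner product is the same
    have hinner : ∀ i : Fin m,
        (inner ℝ (c - z) (T i y - z) : ℝ)
          = (‖c - z‖ ^ 2 + ‖y - z‖ ^ 2 - ρ ^ 2) / 2 := by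
      intro i
      have h2 : ‖(c - z) - (T i y - z)‖ ^ 2
          = ‖c - z‖ ^ 2 - 2 * inner ℝ (c - z) (T i y - z) + ‖T i y - z‖ ^ 2 :=
        norm_sub_sq_real _ _
      have h3 : (c - z) - (T i y - z) = c - T i y := by abel
      rw [h3, hρi i, hr i] at h2
      linarith
    have hD : ‖c - z‖ ^ 2
        = (‖c - z‖ ^ 2 + ‖y - z‖ ^ 2 - ρ ^ 2) / 2 := by
      have h4 : (inner ℝ (c - z) (c - z) : ℝ) = ‖c - z‖ ^ 2 :=
        real_inner_self_eq_norm_sq _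
      calc ‖c - z‖ ^ 2 = (inner ℝ (c - z) (c - z) : ℝ) := h4.symm
        _ = (inner ℝ (c - z) (∑ i, w i • (T i y - z)) : ℝ) := by rw [← hcz]
        _ = ∑ i, w i * (inner ℝ (c - z) (T i y - z) : ℝ) := by
            rw [inner_sum]
            exact Finset.sum_congr rfl fun i _ => real_inner_smul_right _ _ _
        _ = ∑ i, w i * ((‖c - z‖ ^ 2 + ‖y - z‖ ^ 2 - ρ ^ 2) / 2) := by
            exact Finset.sum_congr rfl fun i _ => by rw [hinner i]
        _ = (‖c - z‖ ^ 2 + ‖y - z‖ ^ 2 - ρ ^ 2) / 2 := by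
            rw [← Finset.sum_mul, hw, one_mul]
    have hDle : ‖c - z‖ ^ 2 ≤ ‖y - z‖ ^ 2 := by nlinarith [sq_nonneg ρ]
    nlinarith [norm_nonneg (c - z), norm_nonneg (y - z)]
  -- Fejér monotonicity
  have fejer : ∀ z, (∀ i, T i z = z) → ∀ k : ℕ,
      ‖CC^[k + 1] x - z‖ ≤ ‖CC^[k] x - z‖ := by
    intro z hz k
    rw [Function.iterate_succ_apply']
    exact key z hz _
  refine ⟨fejer, ?_, ?_⟩
  · intro z hz
    refine ⟨⨅ k, ‖CC^[k] x - z‖, tendsto_atTop_ciInf ?_ ?_⟩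
    · exact antitone_nat_of_succ_le (fejer z hz)
    · exact ⟨0, by rintro r ⟨k, rfl⟩; exact norm_nonneg _⟩
  · have hb : ∀ k : ℕ, CC^[k] x ∈ Metric.closedBall z₀ ‖x - z₀‖ := by
      intro k
      rw [Metric.mem_closedBall, dist_eq_norm]
      induction k with
      | zero => simp
      | succ n ih =>
        calc ‖CC^[n + 1] x - z₀‖ ≤ ‖CC^[n] x - z₀‖ := fejer z₀ hz₀ n
          _ ≤ ‖x - z₀‖ := ih
    exact Metric.isBounded_closedBall.subset (by rintro p ⟨k, rfl⟩; exact hb k)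
end

section
/- Let S = {T₁, …, Tₘ} be isometries on a real Hilbert space H with ∩ⱼ Fix Tⱼ ≠ ∅, and assume Id belongs to the affine hull of S (as operators). Then the circumcenter mapping CC_S is asymptotically regular: for every y ∈ H, CC_S^k y − CC_S^{k+1} y → 0. -/
open Filter RealInnerProductSpace

/-- If `Id` belongs to the affine hull of the isometries `S = {T₁, …, Tₘ}`
(with a common fixed point), then the circumcenter mapping `CC_S` is
asymptotically regular. -/
theorem stmt12 {H : Type*} [NormedAddCommGroup H] [InnerProductSpace ℝ H]
    [CompleteSpace H] {m : ℕ}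
    (T : Fin m → H → H) (hiso : ∀ i, Isometry (T i))
    (z₀ : H) (hz₀ : ∀ i, T i z₀ = z₀)
    (CC : H → H)
    (hCC1 : ∀ y, CC y ∈ affineSpan ℝ (Set.range fun i => T i y))
    (hCC2 : ∀ y (i j : Fin m), ‖CC y - T i y‖ = ‖CC y - T j y‖)
    (hCC3 : ∀ y p, p ∈ affineSpan ℝ (Set.range fun i => T i y) →
      (∀ i j : Fin m, ‖p - T i y‖ = ‖p - T j y‖) → p = CC y)
    (hId : ∃ α : Fin m → ℝ, (∑ i, α i) = 1 ∧ ∀ y, y = ∑ i, α i • T i y) :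
    ∀ y : H, Filter.Tendsto (fun k : ℕ => CC^[k] y - CC^[k + 1] y)
      Filter.atTop (nhds 0) := by
  obtain ⟨α, hα1, hα2⟩ := hId
  have hm : 0 < m := by
    rcases Nat.eq_zero_or_pos m with h | h
    · subst h; simp at hα1
    · exact h
  have i₀ : Fin m := ⟨0, hm⟩
  -- Key Pythagorean identity
  have key : ∀ x : H, ‖z₀ - CC x‖ ^ 2 + ‖CC x - x‖ ^ 2 = ‖z₀ - x‖ ^ 2 := by
    intro x
    set c := CC x with hc
    have hA : ∀ i, ‖z₀ - T i x‖ = ‖z₀ - x‖ := by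
      intro i
      have h := (hiso i).dist_eq z₀ x
      rw [hz₀] at h
      simpa [dist_eq_norm] using h
    have hg : ∀ i j : Fin m, (inner ℝ (z₀ - c) (c - T i x) : ℝ) = (inner ℝ (z₀ - c) (c - T j x) : ℝ) := by
      have e : ∀ i : Fin m, (inner ℝ (z₀ - c) (c - T i x) : ℝ) =
          (‖z₀ - T i x‖ * ‖z₀ - T i x‖ - ‖z₀ - c‖ * ‖z₀ - c‖
            - ‖c - T i x‖ * ‖c - T i x‖) / 2 := by
        intro i
        have h := real_inner_eq_norm_add_mul_self_sub_norm_mul_self_sub_norm_mul_self_div_two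
          (z₀ - c) (c - T i x)
        have h2 : z₀ - c + (c - T i x) = z₀ - T i x := by abel
        rw [h2] at h
        exact h
      intro i j
      rw [e i, e j, hA i, hA j, hCC2 x i j]
    have orth : ∀ (w : Fin m → ℝ), (∑ i, w i) = 1 →
        (inner ℝ (z₀ - c) (c - ∑ i, w i • T i x) : ℝ) = (inner ℝ (z₀ - c) (c - T i₀ x) : ℝ) := by
      intro w hw
      have h1 : c - ∑ i, w i • T i x = ∑ i, w i • (c - T i x) := by
        simp only [smul_sub, Finset.sum_sub_distrib, ← Finset.sum_smul, hw, one_smul]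
      rw [h1, inner_sum]
      simp only [real_inner_smul_right]
      have : ∀ i ∈ Finset.univ, w i * (inner ℝ (z₀ - c) (c - T i x) : ℝ)
          = w i * (inner ℝ (z₀ - c) (c - T i₀ x) : ℝ) := by
        intro i _; rw [hg i i₀]
      rw [Finset.sum_congr rfl this, ← Finset.sum_mul, hw, one_mul]
    have hczero : (inner ℝ (z₀ - c) (c - T i₀ x) : ℝ) = 0 := by
      obtain ⟨w, hw, hwc⟩ := eq_affineCombination_of_mem_affineSpan_of_fintype (hCC1 x)
      rw [Finset.univ.affineCombination_eq_linear_combination _ _ hw] at hwc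
      have := orth w hw
      rw [← hwc] at this
      simpa [← hc] using this.symm
    have hinner : (inner ℝ (z₀ - c) (c - x) : ℝ) = 0 := by
      have := orth α hα1
      rw [← hα2 x] at this
      rw [this, hczero]
    have h3 : z₀ - x = (z₀ - c) + (c - x) := by abel
    rw [h3, norm_add_sq_real, hinner]
    ring
  intro y
  set a : ℕ → ℝ := fun k => ‖z₀ - CC^[k] y‖ ^ 2 with ha
  have hstep : ∀ k, ‖CC^[k] y - CC^[k + 1] y‖ ^ 2 = a k - a (k + 1) := by
    intro k
    have h := key (CC^[k] y)
    rw [← Function.iterate_succ_apply' CC k y] at h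
    have : ‖CC^[k] y - CC^[k + 1] y‖ = ‖CC^[k + 1] y - CC^[k] y‖ := norm_sub_rev _ _
    rw [this]
    simp only [ha]
    linarith
  have hanti : Antitone a := by
    apply antitone_nat_of_succ_le
    intro k
    have := hstep k
    nlinarith [sq_nonneg ‖CC^[k] y - CC^[k + 1] y‖]
  have hbdd : BddBelow (Set.range a) := ⟨0, by rintro _ ⟨k, rfl⟩; positivity⟩
  have hconv : Filter.Tendsto a atTop (nhds (⨅ k, a k)) :=
    tendsto_atTop_ciInf hanti hbdd
  have hconv' : Filter.Tendsto (fun k => a (k + 1)) atTop (nhds (⨅ k, a k)) :=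
    hconv.comp (tendsto_add_atTop_nat 1)
  have hd : Filter.Tendsto (fun k => a k - a (k + 1)) atTop (nhds 0) := by
    simpa using hconv.sub hconv'
  have hsq : Filter.Tendsto (fun k => ‖CC^[k] y - CC^[k + 1] y‖ ^ 2) atTop (nhds 0) := by
    simpa only [hstep] using hd
  have hnorm : Filter.Tendsto (fun k => ‖CC^[k] y - CC^[k + 1] y‖) atTop (nhds 0) := by
    have := (Real.continuous_sqrt.tendsto 0).comp hsq
    simp only [Function.comp, Real.sqrt_zero] at this
    convert this using 2 with k
    simp [Function.comp, Real.sqrt_sq (norm_nonneg _)]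
  exact tendsto_zero_iff_norm_tendsto_zero.mpr hnorm
end

section
/- Let S = {T₁, …, Tₘ} be isometries on a real Hilbert space H, let W be a nonempty closed affine subspace of ∩ⱼ Fix Tⱼ, and let x ∈ H. Then the following are equivalent: (i) CC_S x ∈ W; (ii) CC_S x = P_W x; (iii) CC_S^k x = P_W x for all k ≥ 1. -/
open EuclideanGeometry

/-- Each `T i x - x` is orthogonal to the direction of `W`. -/
lemma aux_perp {H : Type*} [NormedAddCommGroup H] [InnerProductSpace ℝ H]
    {m : ℕ} (T : Fin m → H → H) (hiso : ∀ i, Isometry (T i))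
    (W : AffineSubspace ℝ H) [Nonempty W]
    (hW : ∀ w ∈ W, ∀ i, T i w = w) (x : H) (i : Fin m) :
    T i x - x ∈ W.directionᗮ := by
  obtain ⟨w₀, hw₀⟩ := (inferInstance : Nonempty W)
  intro d hd
  rw [← SetLike.mem_coe, AffineSubspace.coe_direction_eq_vsub_set_right hw₀] at hd
  obtain ⟨w, hw, rfl⟩ := hd
  have h1 : ‖T i x - w‖ = ‖x - w‖ := by
    have := (hiso i).dist_eq x w
    rwa [dist_eq_norm, dist_eq_norm, hW w hw i] at this
  have h2 : ‖T i x - w₀‖ = ‖x - w₀‖ := by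
    have := (hiso i).dist_eq x w₀
    rwa [dist_eq_norm, dist_eq_norm, hW _ hw₀ i] at this
  have e1 := congrArg (fun t => t ^ 2) h1
  have e2 := congrArg (fun t => t ^ 2) h2
  simp only [← real_inner_self_eq_norm_sq] at e1 e2
  simp only [inner_sub_sub_self] at e1 e2
  simp only [vsub_eq_sub, inner_sub_left, inner_sub_right, real_inner_comm] at *
  linarith [real_inner_comm x w, real_inner_comm x w₀,
    real_inner_comm (T i x) w, real_inner_comm (T i x) w₀]

/-- For the circumcenter mapping `CC_S` of isometries `S` and a nonempty
closed affine subspace `W` of the common fixed point set, the following are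
equivalent: `CC_S x ∈ W`; `CC_S x = P_W x`; `CC_S^k x = P_W x` for all
`k ≥ 1`. -/
theorem stmt14 {H : Type*} [NormedAddCommGroup H] [InnerProductSpace ℝ H]
    [CompleteSpace H] {m : ℕ}
    (T : Fin m → H → H) (hiso : ∀ i, Isometry (T i))
    (CC : H → H)
    (hCC1 : ∀ y, CC y ∈ affineSpan ℝ (Set.range fun i => T i y))
    (hCC2 : ∀ y (i j : Fin m), ‖CC y - T i y‖ = ‖CC y - T j y‖)
    (hCC3 : ∀ y p, p ∈ affineSpan ℝ (Set.range fun i => T i y) →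
      (∀ i j : Fin m, ‖p - T i y‖ = ‖p - T j y‖) → p = CC y)
    (W : AffineSubspace ℝ H) [Nonempty W] [Submodule.HasOrthogonalProjection W.direction]
    (hW : ∀ w ∈ W, ∀ i, T i w = w)
    (x : H) :
    (CC x ∈ W ↔ CC x = (EuclideanGeometry.orthogonalProjection W x : H)) ∧
    (CC x = (EuclideanGeometry.orthogonalProjection W x : H) ↔
      ∀ k : ℕ, 1 ≤ k → CC^[k] x = (EuclideanGeometry.orthogonalProjection W x : H)) := by
  rcases Nat.eq_zero_or_pos m with hm | hm
  · subst hm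
    have h := hCC1 x
    rw [Set.range_eq_empty, AffineSubspace.span_empty] at h
    exact absurd h (AffineSubspace.notMem_bot ℝ H _)
  have i0 : Fin m := ⟨0, hm⟩
  -- points of W are fixed by CC
  have hfix : ∀ w ∈ W, CC w = w := by
    intro w hw
    refine (hCC3 w w ?_ ?_).symm
    · exact subset_affineSpan ℝ _ ⟨i0, hW w hw i0⟩
    · intro i j; simp [hW w hw]
  -- CC x - x ⟂ W.direction
  have hperp : CC x - x ∈ W.directionᗮ := by
    have hspan : CC x ∈ AffineSubspace.mk' x W.directionᗮ := by
      refine affineSpan_le.2 ?_ (hCC1 x)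
      rintro _ ⟨i, rfl⟩
      rw [SetLike.mem_coe, AffineSubspace.mem_mk', vsub_eq_sub]
      exact aux_perp T hiso W hW x i
    rwa [AffineSubspace.mem_mk', vsub_eq_sub] at hspan
  have key : ∀ q, q ∈ W → q - x ∈ W.directionᗮ →
      q = (EuclideanGeometry.orthogonalProjection W x : H) := by
    intro q hq hq'
    have : q ∈ ((W : Set H) ∩ AffineSubspace.mk' x W.directionᗮ) :=
      ⟨hq, by rwa [SetLike.mem_coe, AffineSubspace.mem_mk', vsub_eq_sub]⟩
    rwa [EuclideanGeometry.inter_eq_singleton_orthogonalProjection,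
      Set.mem_singleton_iff] at this
  constructor
  · constructor
    · intro h; exact key _ h hperp
    · intro h; rw [h]; exact (EuclideanGeometry.orthogonalProjection W x).2
  · constructor
    · intro h k hk
      induction k with
      | zero => omega
      | succ n ih =>
        rcases Nat.eq_zero_or_pos n with hn | hn
        · subst hn; simpa using h
        · rw [Function.iterate_succ_apply', ih hn]
          exact hfix _ (EuclideanGeometry.orthogonalProjection W x).2
    · intro h; simpa using h 1 le_rfl
end

section
/- Let S = {T₁, …, Tₘ} be isometries on a real Hilbert space H, let W be a nonempty closed affine subspace of ∩ⱼ Fix Tⱼ, and suppose there exist a map F : H → H with F(y) ∈ aff(S(y)) for all y, and γ ∈ [0,1), such that ‖Fx − P_W x‖ ≤ γ‖x − P_W x‖ for all x ∈ H. Then for all x ∈ H and all k ∈ ℕ, ‖CC_S^k x − P_W x‖ ≤ γ^k ‖x − P_W x‖; i.e., the circumcentered isometry method converges linearly to P_W x with rate γ. -/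
open EuclideanGeometry

/-- If the difference of squared distances to `u` and to `v` is the same from `a` and from `b`,
then `a - b ⊥ u - v`. -/
private lemma inner_eq_zero_of_sq_diff_eq {H : Type*} [NormedAddCommGroup H]
    [InnerProductSpace ℝ H] (a b u v : H)
    (h : ‖a - u‖ ^ 2 - ‖a - v‖ ^ 2 = ‖b - u‖ ^ 2 - ‖b - v‖ ^ 2) :
    inner ℝ (a - b) (u - v) = (0 : ℝ) := by
  have e : ∀ x y : H, ‖x - y‖ ^ 2 = ‖x‖ ^ 2 - 2 * inner ℝ x y + ‖y‖ ^ 2 := by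
    intro x y
    rw [← real_inner_self_eq_norm_sq, ← real_inner_self_eq_norm_sq,
      ← real_inner_self_eq_norm_sq]
    simp [inner_sub_left, inner_sub_right, real_inner_comm]
    rw [norm_sub_sq_real]
  rw [e, e, e, e] at h
  simp only [inner_sub_left, inner_sub_right]
  linarith

/-- Linear-rate transfer: if some `F` with `F(y) ∈ aff S(y)` contracts toward
`P_W` with rate `γ ∈ [0,1)`, then the circumcentered isometry method
converges linearly to `P_W x` with rate `γ`. -/
theorem stmt15 {H : Type*} [NormedAddCommGroup H] [InnerProductSpace ℝ H]
    [CompleteSpace H] {m : ℕ}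
    (T : Fin m → H → H) (hiso : ∀ i, Isometry (T i))
    (CC : H → H)
    (hCC1 : ∀ y, CC y ∈ affineSpan ℝ (Set.range fun i => T i y))
    (hCC2 : ∀ y (i j : Fin m), ‖CC y - T i y‖ = ‖CC y - T j y‖)
    (hCC3 : ∀ y p, p ∈ affineSpan ℝ (Set.range fun i => T i y) →
      (∀ i j : Fin m, ‖p - T i y‖ = ‖p - T j y‖) → p = CC y)
    (W : AffineSubspace ℝ H) [Nonempty W] [W.direction.HasOrthogonalProjection]
    (hW : ∀ w ∈ W, ∀ i, T i w = w)
    (γ : ℝ) (hγ0 : 0 ≤ γ) (hγ1 : γ < 1)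
    (F : H → H) (hFy : ∀ y, F y ∈ affineSpan ℝ (Set.range fun i => T i y))
    (hcontr : ∀ x : H, ‖F x - (EuclideanGeometry.orthogonalProjection W x : H)‖
      ≤ γ * ‖x - (EuclideanGeometry.orthogonalProjection W x : H)‖) :
    ∀ (x : H) (k : ℕ),
      ‖CC^[k] x - (EuclideanGeometry.orthogonalProjection W x : H)‖
        ≤ γ ^ k * ‖x - (EuclideanGeometry.orthogonalProjection W x : H)‖ := by
  -- m ≠ 0, else the affine span of an empty range is ⊥ and hCC1 is contradictory
  rcases Nat.eq_zero_or_pos m with hm | hm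
  · exfalso
    subst hm
    have h := hCC1 0
    rw [Set.range_eq_empty, AffineSubspace.span_empty] at h
    exact h
  obtain ⟨i₀⟩ : Nonempty (Fin m) := ⟨⟨0, hm⟩⟩
  -- every point of W is equidistant from the T i y
  have hWdist : ∀ w ∈ W, ∀ y, ∀ i : Fin m, ‖w - T i y‖ = ‖w - y‖ := by
    intro w hw y i
    have := (hiso i).dist_eq w y
    rw [hW w hw i] at this
    simpa [dist_eq_norm] using this
  -- w - CC y is orthogonal to the direction of the affine span of the T i y
  have horth : ∀ w ∈ W, ∀ y, ∀ v ∈ vectorSpan ℝ (Set.range fun i => T i y),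
      inner ℝ (w - CC y) v = (0 : ℝ) := by
    intro w hw y v hv
    rw [vectorSpan_def] at hv
    induction hv using Submodule.span_induction with
    | mem u hu =>
      obtain ⟨p, ⟨i, rfl⟩, q, ⟨j, rfl⟩, rfl⟩ := hu
      have h1 : dist (T j y) (CC y) = dist (T i y) (CC y) := by
        simp [dist_eq_norm, norm_sub_rev]
        rw [norm_sub_rev, norm_sub_rev (T i y)]
        exact (hCC2 y j i)
      have h2 : dist (T j y) w = dist (T i y) w := by
        simp only [dist_eq_norm]
        rw [norm_sub_rev, norm_sub_rev (T i y)]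
        rw [hWdist w hw y j, hWdist w hw y i]
      have := inner_vsub_vsub_of_dist_eq_of_dist_eq h1 h2
      simpa [vsub_eq_sub] using this
    | zero => simp
    | add u₁ u₂ _ _ h1 h2 => rw [inner_add_right, h1, h2]; ring
    | smul c u _ h1 => rw [real_inner_smul_right, h1]; ring
  -- Pythagoras: for q in the affine span and w ∈ W
  have hpyth : ∀ w ∈ W, ∀ y, ∀ q ∈ affineSpan ℝ (Set.range fun i => T i y),
      ‖w - CC y‖ ^ 2 + ‖CC y - q‖ ^ 2 = ‖w - q‖ ^ 2 := by
    intro w hw y q hq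
    have hd : q - CC y ∈ vectorSpan ℝ (Set.range fun i => T i y) := by
      have := AffineSubspace.vsub_mem_direction hq (hCC1 y)
      rwa [direction_affineSpan] at this
    have h0 : inner ℝ (w - CC y) (q - CC y) = (0 : ℝ) := horth w hw y _ hd
    have hwq : w - q = (w - CC y) - (q - CC y) := by abel
    have hq2 : ‖w - q‖ ^ 2 = ‖w - CC y‖ ^ 2 + ‖q - CC y‖ ^ 2 := by
      rw [hwq, norm_sub_sq_real (w - CC y), h0]; ring
    rw [norm_sub_rev (CC y) q]
    linarith
  -- projection invariance: CC y - y ⊥ W.direction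
  have hinv : ∀ y, (EuclideanGeometry.orthogonalProjection W (CC y) : H)
      = (EuclideanGeometry.orthogonalProjection W y : H) := by
    intro y
    have hCCy : ∀ v ∈ W.direction, inner ℝ v (CC y - y) = (0 : ℝ) := by
      intro v hv
      obtain ⟨w, hw⟩ := (nonempty_subtype.mp ‹Nonempty W›)
      have hw2 : v + w ∈ W := by
        simpa [vadd_eq_add] using AffineSubspace.vadd_mem_of_mem_direction hv hw
      -- ‖w' - CC y‖² + r² = ‖w' - y‖² for w' ∈ W, r = ‖CC y - T i₀ y‖
      have key : ∀ w' ∈ W, ‖w' - CC y‖ ^ 2 - ‖w' - y‖ ^ 2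
          = -‖CC y - T i₀ y‖ ^ 2 := by
        intro w' hw'
        have := hpyth w' hw' y (T i₀ y) (mem_affineSpan ℝ ⟨i₀, rfl⟩)
        rw [hWdist w' hw' y i₀] at this
        linarith
      have h := inner_eq_zero_of_sq_diff_eq (v + w) w (CC y) y
        (by rw [key _ hw2, key _ hw])
      simpa using h
    -- CC y - P_W y ∈ W.directionᗮ, so P_W (CC y) = P_W y
    have hmem : CC y -ᵥ (EuclideanGeometry.orthogonalProjection W y : H)
        ∈ W.directionᗮ := by
      have h1 : y -ᵥ (EuclideanGeometry.orthogonalProjection W y : H) ∈ W.directionᗮ :=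
        vsub_orthogonalProjection_mem_direction_orthogonal W y
      have h2 : CC y - y ∈ W.directionᗮ :=
        (Submodule.mem_orthogonal _ _).mpr fun v hv => hCCy v hv
      have : CC y -ᵥ (EuclideanGeometry.orthogonalProjection W y : H)
          = (CC y - y) + (y -ᵥ (EuclideanGeometry.orthogonalProjection W y : H)) := by
        simp only [vsub_eq_sub]; abel
      rw [this]
      exact Submodule.add_mem _ h2 h1
    have hset : (EuclideanGeometry.orthogonalProjection W y : H)
        ∈ (W : Set H) ∩ AffineSubspace.mk' (CC y) W.directionᗮ := by
      constructor
      · exact EuclideanGeometry.orthogonalProjection_mem y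
      · rw [AffineSubspace.mem_coe, AffineSubspace.mem_mk']
        have := Submodule.neg_mem _ hmem
        simpa [vsub_eq_sub, neg_sub] using this
    rw [EuclideanGeometry.inter_eq_singleton_orthogonalProjection (CC y)] at hset
    exact hset.symm
  -- one-step contraction relative to P_W y
  have hstep : ∀ y : H, ‖CC y - (EuclideanGeometry.orthogonalProjection W y : H)‖
      ≤ γ * ‖y - (EuclideanGeometry.orthogonalProjection W y : H)‖ := by
    intro y
    set w : H := (EuclideanGeometry.orthogonalProjection W y : H) with hwdef
    have hwW : w ∈ W := EuclideanGeometry.orthogonalProjection_mem y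
    have h1 : ‖w - CC y‖ ^ 2 ≤ ‖w - F y‖ ^ 2 := by
      have := hpyth w hwW y (F y) (hFy y)
      nlinarith [sq_nonneg ‖CC y - F y‖]
    have h2 : ‖w - CC y‖ ≤ ‖w - F y‖ := by
      nlinarith [norm_nonneg (w - CC y), norm_nonneg (w - F y)]
    calc ‖CC y - w‖ = ‖w - CC y‖ := norm_sub_rev _ _
      _ ≤ ‖w - F y‖ := h2
      _ = ‖F y - w‖ := norm_sub_rev _ _
      _ ≤ γ * ‖y - w‖ := hcontr y
  -- projection of iterates is constant
  intro x k
  have hproj : ∀ k : ℕ, (EuclideanGeometry.orthogonalProjection W (CC^[k] x) : H)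
      = (EuclideanGeometry.orthogonalProjection W x : H) := by
    intro k
    induction k with
    | zero => simp
    | succ n ih =>
      rw [Function.iterate_succ_apply', hinv, ih]
  induction k with
  | zero => simp
  | succ n ih =>
    rw [Function.iterate_succ_apply']
    calc ‖CC (CC^[n] x) - (EuclideanGeometry.orthogonalProjection W x : H)‖
        = ‖CC (CC^[n] x)
            - (EuclideanGeometry.orthogonalProjection W (CC^[n] x) : H)‖ := by
          rw [hproj n]
      _ ≤ γ * ‖CC^[n] x
            - (EuclideanGeometry.orthogonalProjection W (CC^[n] x) : H)‖ := hstep _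
      _ = γ * ‖CC^[n] x - (EuclideanGeometry.orthogonalProjection W x : H)‖ := by
          rw [hproj n]
      _ ≤ γ * (γ ^ n * ‖x - (EuclideanGeometry.orthogonalProjection W x : H)‖) :=
          mul_le_mul_of_nonneg_left ih hγ0
      _ = γ ^ (n + 1) * ‖x - (EuclideanGeometry.orthogonalProjection W x : H)‖ := by
          ring
end

section
/- Let S = {T₁, …, Tₘ} be isometries on ℝⁿ, and suppose T_S ∈ aff(S) is linear, α-averaged for some α ∈ (0,1), and Fix T_S ⊆ ∩_{T∈S} Fix T. Then Fix T_S = ∩_{T∈S} Fix T, and for every x ∈ ℝⁿ the sequence (CC_S^k x) converges to P_{∩_{T∈S} Fix T} x linearly with rate ‖T_S ∘ P_{(∩_{T∈S} Fix T)^⊥}‖ ∈ [0,1). -/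
open scoped RealInnerProductSpace

/-- The circumcenter (characterized as the unique equidistant point in the affine span)
is the orthogonal projection of any point equidistant from all the `f i` onto that span,
hence minimizes distance to such points among points of the span, and satisfies a
Pythagorean identity. -/
lemma stmt16_aux {n m : ℕ} (hm : 0 < m) (f : Fin m → EuclideanSpace ℝ (Fin n))
    (c : EuclideanSpace ℝ (Fin n))
    (hc : ∀ p, p ∈ affineSpan ℝ (Set.range f) → (∀ i j, ‖p - f i‖ = ‖p - f j‖) → p = c)
    (z : EuclideanSpace ℝ (Fin n)) (r : ℝ) (hr : ∀ i, ‖f i - z‖ = r) :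
    (∀ w ∈ affineSpan ℝ (Set.range f), ‖c - z‖ ≤ ‖w - z‖) ∧
      (∀ i, ‖c - z‖ ^ 2 = r ^ 2 - ‖c - f i‖ ^ 2) := by
  haveI : Nonempty (affineSpan ℝ (Set.range f)) :=
    ⟨⟨f ⟨0, hm⟩, subset_affineSpan ℝ _ (Set.mem_range_self _)⟩⟩
  set s := affineSpan ℝ (Set.range f) with hs
  set p : EuclideanSpace ℝ (Fin n) := ↑(EuclideanGeometry.orthogonalProjection s z) with hp
  have hpmem : p ∈ s := EuclideanGeometry.orthogonalProjection_mem z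
  have hzp : z - p ∈ s.directionᗮ := by
    have := EuclideanGeometry.vsub_orthogonalProjection_mem_direction_orthogonal s z
    rwa [vsub_eq_sub] at this
  have pyth : ∀ w ∈ s, ‖w - z‖ ^ 2 = ‖w - p‖ ^ 2 + ‖p - z‖ ^ 2 := by
    intro w hw
    have hdir : w - p ∈ s.direction := by
      have := AffineSubspace.vsub_mem_direction hw hpmem
      rwa [vsub_eq_sub] at this
    have hin : ⟪w - p, p - z⟫ = 0 := by
      have h0 : ⟪w - p, z - p⟫ = 0 := (Submodule.mem_orthogonal _ _).mp hzp (w - p) hdir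
      have hneg : p - z = -(z - p) := by abel
      rw [hneg, inner_neg_right, h0, neg_zero]
    have hsplit : w - z = (w - p) + (p - z) := by abel
    rw [hsplit, norm_add_sq_real, hin]
    ring
  have heq : ∀ i, ‖p - f i‖ ^ 2 = r ^ 2 - ‖p - z‖ ^ 2 := by
    intro i
    have h1 := pyth (f i) (subset_affineSpan ℝ _ (Set.mem_range_self i))
    have h2 : ‖f i - z‖ ^ 2 = r ^ 2 := by rw [hr i]
    have h3 : ‖f i - p‖ = ‖p - f i‖ := norm_sub_rev _ _
    rw [h3] at h1
    linarith
  have hpc : p = c := by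
    refine hc p hpmem fun i j => ?_
    have hij : ‖p - f i‖ ^ 2 = ‖p - f j‖ ^ 2 := by
      have := heq i; have := heq j; linarith
    have hni := Real.sqrt_sq (norm_nonneg (p - f i))
    have hnj := Real.sqrt_sq (norm_nonneg (p - f j))
    rw [← hni, ← hnj, hij]
  constructor
  · intro w hw
    have h1 := pyth w hw
    rw [hpc] at h1
    nlinarith [norm_nonneg (w - z), norm_nonneg (c - z), sq_nonneg ‖w - c‖]
  · intro i
    have h1 := pyth (f i) (subset_affineSpan ℝ _ (Set.mem_range_self i))
    have h2 : ‖f i - z‖ ^ 2 = r ^ 2 := by rw [hr i]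
    have h3 : ‖f i - p‖ = ‖p - f i‖ := norm_sub_rev _ _
    rw [hpc] at h1
    rw [norm_sub_rev c (f i)]
    linarith

set_option maxHeartbeats 1000000 in
set_option synthInstance.maxHeartbeats 400000 in
/-- If `T_S ∈ aff S` is linear and `α`-averaged with `Fix T_S ⊆ ∩_{T∈S} Fix T`,
then `Fix T_S = ∩_{T∈S} Fix T` and the circumcentered isometry method
converges linearly to the projection onto the common fixed point set, with
rate `‖T_S ∘ P_{(∩ Fix T)ᗮ}‖ < 1`. -/
theorem stmt16 {n : ℕ} {m : ℕ}
    (T : Fin m → EuclideanSpace ℝ (Fin n) → EuclideanSpace ℝ (Fin n))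
    (hiso : ∀ i, Isometry (T i))
    (CC : EuclideanSpace ℝ (Fin n) → EuclideanSpace ℝ (Fin n))
    (hCC1 : ∀ y, CC y ∈ affineSpan ℝ (Set.range fun i => T i y))
    (hCC2 : ∀ y (i j : Fin m), ‖CC y - T i y‖ = ‖CC y - T j y‖)
    (hCC3 : ∀ y p, p ∈ affineSpan ℝ (Set.range fun i => T i y) →
      (∀ i j : Fin m, ‖p - T i y‖ = ‖p - T j y‖) → p = CC y)
    (TS : EuclideanSpace ℝ (Fin n) →L[ℝ] EuclideanSpace ℝ (Fin n))
    (hTSaff : ∃ α : Fin m → ℝ, (∑ i, α i) = 1 ∧ ∀ x, TS x = ∑ i, α i • T i x)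
    (a : ℝ) (ha : a ∈ Set.Ioo (0 : ℝ) 1)
    (hav : ∃ R : EuclideanSpace ℝ (Fin n) → EuclideanSpace ℝ (Fin n),
      (∀ u v, ‖R u - R v‖ ≤ ‖u - v‖) ∧ ∀ u, TS u = (1 - a) • u + a • R u)
    (hFixSub : ∀ x, TS x = x → ∀ i, T i x = x)
    (F : Submodule ℝ (EuclideanSpace ℝ (Fin n)))
    (hF : ∀ x, x ∈ F ↔ ∀ i, T i x = x) :
    ((F : Set (EuclideanSpace ℝ (Fin n))) = {x | TS x = x}) ∧
    ‖TS.comp (Fᗮ.subtypeL.comp (Submodule.orthogonalProjectionOnto Fᗮ))‖ < 1 ∧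
    ∀ (x : EuclideanSpace ℝ (Fin n)) (k : ℕ),
      ‖CC^[k] x - (Submodule.orthogonalProjectionOnto F x : EuclideanSpace ℝ (Fin n))‖
        ≤ ‖TS.comp (Fᗮ.subtypeL.comp (Submodule.orthogonalProjectionOnto Fᗮ))‖ ^ k
          * ‖x - (Submodule.orthogonalProjectionOnto F x : EuclideanSpace ℝ (Fin n))‖ := by
  obtain ⟨α, hα1, hαT⟩ := hTSaff
  obtain ⟨R, hRne, hRdef⟩ := hav
  obtain ⟨ha0, ha1⟩ := ha
  set A := TS.comp (Fᗮ.subtypeL.comp (Submodule.orthogonalProjectionOnto Fᗮ)) with hA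
  have hm : 0 < m := by
    rcases Nat.eq_zero_or_pos m with h | h
    · subst h; exact absurd hα1 (by simp)
    · exact h
  have hR0 : R 0 = 0 := by
    have h := hRdef 0
    rw [map_zero, smul_zero, zero_add] at h
    exact (smul_eq_zero.mp h.symm).resolve_left (ne_of_gt ha0)
  have hRle : ∀ u, ‖R u‖ ≤ ‖u‖ := by
    intro u
    have h := hRne u 0
    rwa [hR0, sub_zero, sub_zero] at h
  have hTSnorm : ∀ u, ‖TS u‖ ≤ ‖u‖ := by
    intro u
    calc ‖TS u‖ = ‖(1 - a) • u + a • R u‖ := by rw [hRdef]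
      _ ≤ ‖(1 - a) • u‖ + ‖a • R u‖ := norm_add_le _ _
      _ = (1 - a) * ‖u‖ + a * ‖R u‖ := by
          rw [norm_smul, norm_smul, Real.norm_of_nonneg (by linarith),
            Real.norm_of_nonneg ha0.le]
      _ ≤ (1 - a) * ‖u‖ + a * ‖u‖ := by nlinarith [hRle u]
      _ = ‖u‖ := by ring
  have hFfix : ∀ z ∈ F, TS z = z := by
    intro z hz
    rw [hαT]
    simp only [(hF z).mp hz]
    rw [← Finset.sum_smul, hα1, one_smul]
  have hset : (F : Set (EuclideanSpace ℝ (Fin n))) = {x | TS x = x} := by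
    ext x
    simp only [Set.mem_setOf_eq, SetLike.mem_coe]
    exact ⟨fun h => hFfix x h, fun h => (hF x).mpr (hFixSub x h)⟩
  -- key geometric facts about CC
  have hmain : ∀ y z, z ∈ F →
      ((∀ w ∈ affineSpan ℝ (Set.range fun i => T i y), ‖CC y - z‖ ≤ ‖w - z‖) ∧
        (∀ i, ‖CC y - z‖ ^ 2 = ‖y - z‖ ^ 2 - ‖CC y - T i y‖ ^ 2)) := by
    intro y z hz
    have hr : ∀ i, ‖T i y - z‖ = ‖y - z‖ := by
      intro i
      have h2 : T i z = z := ((hF z).mp hz) i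
      calc ‖T i y - z‖ = dist (T i y) (T i z) := by rw [h2, dist_eq_norm]
        _ = dist y z := (hiso i).dist_eq y z
        _ = ‖y - z‖ := dist_eq_norm _ _
    exact stmt16_aux hm (fun i => T i y) (CC y) (hCC3 y) z ‖y - z‖ hr
  have hTSmem : ∀ y, TS y ∈ affineSpan ℝ (Set.range fun i => T i y) := by
    intro y
    have h1 : Finset.univ.affineCombination ℝ (fun i => T i y) α ∈
        affineSpan ℝ (Set.range fun i => T i y) :=
      affineCombination_mem_affineSpan hα1 _
    rwa [Finset.affineCombination_eq_linear_combination _ _ _ hα1, ← hαT y] at h1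
  have hCCsub : ∀ y, CC y - y ∈ Fᗮ := by
    intro y
    have h0 := (hmain y 0 F.zero_mem).2 ⟨0, hm⟩
    rw [Submodule.mem_orthogonal]
    intro z hz
    have hzeq := (hmain y z hz).2 ⟨0, hm⟩
    have e1 : ‖CC y - z‖ ^ 2 = ‖CC y‖ ^ 2 - 2 * ⟪CC y, z⟫ + ‖z‖ ^ 2 := norm_sub_sq_real _ _
    have e2 : ‖y - z‖ ^ 2 = ‖y‖ ^ 2 - 2 * ⟪y, z⟫ + ‖z‖ ^ 2 := norm_sub_sq_real _ _
    rw [sub_zero, sub_zero] at h0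
    rw [inner_sub_right, real_inner_comm (CC y) z, real_inner_comm y z]
    have : ⟪CC y, z⟫ = ⟪y, z⟫ := by linarith
    linarith
  have hPCC : ∀ y, (Submodule.orthogonalProjectionOnto F (CC y) : EuclideanSpace ℝ (Fin n))
      = Submodule.orthogonalProjectionOnto F y := by
    intro y
    have h2 : Submodule.orthogonalProjectionOnto F (CC y - y) = 0 :=
      Submodule.orthogonalProjectionOnto_apply_of_mem_orthogonal (hCCsub y)
    have h3 := map_sub (Submodule.orthogonalProjectionOnto F) (CC y) y
    rw [h2] at h3
    have h4 : Submodule.orthogonalProjectionOnto F (CC y) = Submodule.orthogonalProjectionOnto F y :=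
      sub_eq_zero.mp h3.symm
    exact congrArg _ h4
  have hAap : ∀ u, u ∈ Fᗮ → A u = TS u := by
    intro u hu
    simp [hA, ContinuousLinearMap.comp_apply, Submodule.starProjection_eq_self_iff.mpr hu]
  have hstep : ∀ y, ‖CC y - (Submodule.orthogonalProjectionOnto F y : EuclideanSpace ℝ (Fin n))‖
      ≤ ‖A‖ * ‖y - (Submodule.orthogonalProjectionOnto F y : EuclideanSpace ℝ (Fin n))‖ := by
    intro y
    set z : EuclideanSpace ℝ (Fin n) := (Submodule.orthogonalProjectionOnto F y : EuclideanSpace ℝ (Fin n))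
      with hz
    have hzF : z ∈ F := SetLike.coe_mem _
    have h1 : ‖CC y - z‖ ≤ ‖TS y - z‖ := (hmain y z hzF).1 (TS y) (hTSmem y)
    have h2 : TS y - z = TS (y - z) := by rw [map_sub, hFfix z hzF]
    have h3 : y - z ∈ Fᗮ := Submodule.sub_starProjection_mem_orthogonal y
    calc ‖CC y - z‖ ≤ ‖TS (y - z)‖ := by rw [← h2]; exact h1
      _ = ‖A (y - z)‖ := by rw [hAap _ h3]
      _ ≤ ‖A‖ * ‖y - z‖ := A.le_opNorm _
  have hAnorm : ‖A‖ < 1 := by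
    obtain ⟨x₀, hx₀, hmax⟩ := (isCompact_closedBall (0 : EuclideanSpace ℝ (Fin n)) 1).exists_isMaxOn
      (Metric.nonempty_closedBall.mpr zero_le_one)
      (A.continuous.norm.continuousOn)
    have hle : ‖A‖ ≤ ‖A x₀‖ := by
      refine A.opNorm_le_bound (norm_nonneg _) fun x => ?_
      rcases eq_or_ne x 0 with rfl | hx
      · simp
      · have hxpos : 0 < ‖x‖ := norm_pos_iff.mpr hx
        have hmem : ‖x‖⁻¹ • x ∈ Metric.closedBall (0 : EuclideanSpace ℝ (Fin n)) 1 := by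
          rw [Metric.mem_closedBall, dist_zero_right, norm_smul, norm_inv, norm_norm,
            inv_mul_cancel₀ hxpos.ne']
        have hb : ‖A (‖x‖⁻¹ • x)‖ ≤ ‖A x₀‖ := hmax hmem
        simp only [map_smul, norm_smul, norm_inv, norm_norm] at hb
        calc ‖A x‖ = ‖x‖ * (‖x‖⁻¹ * ‖A x‖) := by field_simp
          _ ≤ ‖x‖ * ‖A x₀‖ := mul_le_mul_of_nonneg_left hb hxpos.le
          _ = ‖A x₀‖ * ‖x‖ := mul_comm _ _
    refine lt_of_le_of_lt hle ?_
    by_contra hcon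
    push_neg at hcon
    set u : EuclideanSpace ℝ (Fin n) := (Submodule.orthogonalProjectionOnto Fᗮ x₀ : EuclideanSpace ℝ (Fin n))
      with hu
    have huF : u ∈ Fᗮ := SetLike.coe_mem _
    have hAx : A x₀ = TS u := by
      simp [hA, hu, ContinuousLinearMap.comp_apply]
    have hx₀le : ‖x₀‖ ≤ 1 := by
      rw [Metric.mem_closedBall, dist_zero_right] at hx₀; exact hx₀
    have hule : ‖u‖ ≤ 1 := by
      have h1 : ‖Submodule.orthogonalProjectionOnto Fᗮ x₀‖ ≤ ‖Submodule.orthogonalProjectionOnto Fᗮ‖ * ‖x₀‖ :=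
        (Submodule.orthogonalProjectionOnto Fᗮ).le_opNorm _
      have h2 : ‖Submodule.orthogonalProjectionOnto Fᗮ‖ ≤ 1 := Submodule.orthogonalProjectionOnto_norm_le Fᗮ
      have h3 : ‖u‖ = ‖Submodule.orthogonalProjectionOnto Fᗮ x₀‖ := rfl
      nlinarith [norm_nonneg x₀, norm_nonneg (Submodule.orthogonalProjectionOnto Fᗮ x₀)]
    have hTSu1 : ‖TS u‖ = 1 ∧ ‖u‖ = 1 := by
      have h1 : 1 ≤ ‖TS u‖ := by rw [← hAx]; exact hcon
      have h2 : ‖TS u‖ ≤ ‖u‖ := hTSnorm u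
      constructor <;> linarith
    have hRu : ‖R u‖ ≤ 1 := by
      have := hRle u; linarith [hTSu1.2]
    have e1s : ‖(1 - a) • u + a • R u‖ ^ 2 = 1 := by
      rw [← hRdef, hTSu1.1]; norm_num
    have e2 : ‖(1 - a) • u + a • R u‖ ^ 2
        = (1 - a) ^ 2 * ‖u‖ ^ 2 + 2 * ((1 - a) * a) * ⟪u, R u⟫ + a ^ 2 * ‖R u‖ ^ 2 := by
      rw [norm_add_sq_real, norm_smul, norm_smul, real_inner_smul_left, real_inner_smul_right,
        Real.norm_of_nonneg (by linarith : (0:ℝ) ≤ 1 - a), Real.norm_of_nonneg ha0.le,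
        mul_pow, mul_pow]
      ring
    have e3 : ‖u - R u‖ ^ 2 = ‖u‖ ^ 2 - 2 * ⟪u, R u⟫ + ‖R u‖ ^ 2 := norm_sub_sq_real _ _
    rw [hTSu1.2] at e2 e3
    rw [e2] at e1s
    have key : a * (1 - a) * ‖u - R u‖ ^ 2 = a * ‖R u‖ ^ 2 - a := by
      linear_combination (a * (1 - a)) * e3 - e1s
    have hd : ‖u - R u‖ ^ 2 ≤ 0 := by
      nlinarith [mul_pos ha0 (by linarith : (0:ℝ) < 1 - a), key,
        mul_nonneg (mul_nonneg ha0.le (sub_nonneg.mpr hRu))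
          (by linarith [norm_nonneg (R u)] : (0:ℝ) ≤ 1 + ‖R u‖)]
    have hueq : u = R u := by
      have h9 : ‖u - R u‖ ^ 2 = 0 := le_antisymm hd (sq_nonneg _)
      have h10 : ‖u - R u‖ = 0 := by
        have := sq_nonneg ‖u - R u‖
        nlinarith [norm_nonneg (u - R u)]
      exact sub_eq_zero.mp (norm_eq_zero.mp h10)
    have hTSu : TS u = u := by
      rw [hRdef, ← hueq, ← add_smul]
      norm_num
    have huFmem : u ∈ F := (hF u).mpr (hFixSub u hTSu)
    have : ⟪u, u⟫ = 0 := (Submodule.mem_orthogonal F u).mp huF u huFmem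
    have : u = 0 := inner_self_eq_zero.mp this
    rw [this] at hTSu1
    simp at hTSu1
  refine ⟨hset, hAnorm, ?_⟩
  intro x k
  have hiter : ∀ k, ((Submodule.orthogonalProjectionOnto F (CC^[k] x) : EuclideanSpace ℝ (Fin n))
        = (Submodule.orthogonalProjectionOnto F x : EuclideanSpace ℝ (Fin n))) ∧
      ‖CC^[k] x - (Submodule.orthogonalProjectionOnto F x : EuclideanSpace ℝ (Fin n))‖
        ≤ ‖A‖ ^ k * ‖x - (Submodule.orthogonalProjectionOnto F x : EuclideanSpace ℝ (Fin n))‖ := by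
    intro k
    induction k with
    | zero =>
      simp only [Function.iterate_zero, id_eq, pow_zero, one_mul]
      exact ⟨trivial, le_refl _⟩
    | succ k ih =>
      obtain ⟨ih1, ih2⟩ := ih
      rw [Function.iterate_succ_apply']
      constructor
      · exact (hPCC _).trans ih1
      · have h1 := hstep (CC^[k] x)
        rw [ih1] at h1
        calc ‖CC (CC^[k] x) - (Submodule.orthogonalProjectionOnto F x : EuclideanSpace ℝ (Fin n))‖
            ≤ ‖A‖ * ‖CC^[k] x - (Submodule.orthogonalProjectionOnto F x : EuclideanSpace ℝ (Fin n))‖ := h1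
          _ ≤ ‖A‖ * (‖A‖ ^ k * ‖x - (Submodule.orthogonalProjectionOnto F x : EuclideanSpace ℝ (Fin n))‖) :=
              mul_le_mul_of_nonneg_left ih2 (norm_nonneg A)
          _ = ‖A‖ ^ (k + 1) * ‖x - (Submodule.orthogonalProjectionOnto F x : EuclideanSpace ℝ (Fin n))‖ := by
              ring
  exact (hiter k).2
end

section
/- Let U₁, …, U_t be closed affine subspaces of a real Hilbert space H with nonempty intersection, Lᵢ = Uᵢ − Uᵢ, and let x ∈ H. Then for every finite composition R = R_{U_{i_r}}⋯R_{U_{i_1}} of reflectors, Rx − x lies in (∩ᵢ Lᵢ)^⊥; that is, ⟨Rx − x, z⟩ = 0 for all z ∈ ∩ᵢ Lᵢ. -/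
open scoped RealInnerProductSpace

/-- For any finite composition `R` of reflectors through closed affine
subspaces `Uᵢ` with nonempty intersection, `Rx − x` is orthogonal to
`∩ᵢ Lᵢ`, where `Lᵢ` is the linear subspace parallel to `Uᵢ`. -/
theorem stmt18 {H : Type*} [NormedAddCommGroup H] [InnerProductSpace ℝ H]
    [CompleteSpace H] {t : ℕ}
    (U : Fin t → AffineSubspace ℝ H)
    [∀ i, Nonempty (U i)] [∀ i, Submodule.HasOrthogonalProjection (U i).direction]
    (z₀ : H) (hz₀ : ∀ i, z₀ ∈ U i)
    (RU : Fin t → H → H)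
    (hRU : ∀ i y, RU i y =
      (2 : ℝ) • (EuclideanGeometry.orthogonalProjection (U i) y : H) - y)
    (x : H) (l : List (Fin t)) :
    ∀ w : H, (∀ i, w ∈ (U i).direction) →
      ⟪l.foldl (fun y i => RU i y) x - x, w⟫ = 0 := by
  induction l generalizing x with
  | nil => simp
  | cons i l ih =>
    intro w hw
    have step : ⟪RU i x - x, w⟫ = 0 := by
      have h := EuclideanGeometry.orthogonalProjection_vsub_mem_direction_orthogonal (U i) x
      have h' : ⟪(EuclideanGeometry.orthogonalProjection (U i) x : H) - x, w⟫ = 0 := by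
        have := h w (hw i)
        rw [real_inner_comm] at this
        simpa [vsub_eq_sub] using this
      have : RU i x - x =
          (2 : ℝ) • ((EuclideanGeometry.orthogonalProjection (U i) x : H) - x) := by
        rw [hRU]; module
      rw [this, inner_smul_left, h']
      simp
    have : (i :: l).foldl (fun y i => RU i y) x - x =
        (l.foldl (fun y i => RU i y) (RU i x) - RU i x) + (RU i x - x) := by
      simp [List.foldl_cons]
    rw [this, inner_add_left, ih (RU i x) w hw, step, add_zero]
end

section
/- Let C₁, …, C_N be closed affine subspaces of a real Hilbert space H with ∩ᵢ Cᵢ ≠ ∅, and define Q := (1/N)(P_{C₁} + ⋯ + P_{C_N}). Then for every x ∈ H, the iterates Q^k x converge strongly to P_{∩ᵢ Cᵢ} x. -/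
open Filter Topology RealInnerProductSpace

section Aux

variable {H : Type*} [NormedAddCommGroup H] [InnerProductSpace ℝ H] [CompleteSpace H]

private lemma aux_mem_iInf {ι : Type*} (C : ι → AffineSubspace ℝ H) (p : H) :
    p ∈ (⨅ i, C i : AffineSubspace ℝ H) ↔ ∀ i, p ∈ C i := by
  have key : ∀ s : AffineSubspace ℝ H, p ∈ s ↔ affineSpan ℝ ({p} : Set H) ≤ s := by
    intro s
    rw [affineSpan_le, Set.singleton_subset_iff]
    rfl
  simp only [key, le_iInf_iff]

private lemma aux_mem_direction {s : AffineSubspace ℝ H} {z : H} (hz : z ∈ s) (v : H) :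
    v ∈ s.direction ↔ v + z ∈ s := by
  constructor
  · intro hv
    simpa using AffineSubspace.vadd_mem_of_mem_direction hv hz
  · intro hv
    simpa using AffineSubspace.vsub_mem_direction hv hz

private lemma aux_pow_comm (T : H →L[ℝ] H) (m : ℕ) (u : H) :
    (T ^ m) (T u) = T ((T ^ m) u) := by
  rw [← ContinuousLinearMap.mul_apply, ← pow_succ, pow_succ', ContinuousLinearMap.mul_apply]

private lemma aux_pow_sym (T : H →L[ℝ] H) (hsym : ∀ u v : H, ⟪T u, v⟫ = ⟪u, T v⟫) :
    ∀ (k : ℕ) (u v : H), ⟪(T ^ k) u, v⟫ = ⟪u, (T ^ k) v⟫ := by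
  intro k
  induction k with
  | zero => simp
  | succ n ih =>
    intro u v
    rw [pow_succ, ContinuousLinearMap.mul_apply, ContinuousLinearMap.mul_apply,
      ih (T u) v, hsym u ((T ^ n) v), aux_pow_comm]

/-- positivity of `T(1-T)` in the quadratic-form sense -/
private lemma aux_pos1 (T : H →L[ℝ] H) (hsym : ∀ u v : H, ⟪T u, v⟫ = ⟪u, T v⟫)
    (hTpos : ∀ u : H, 0 ≤ ⟪T u, u⟫) (hSpos : ∀ u : H, 0 ≤ ⟪u - T u, u⟫) (u : H) :
    0 ≤ ⟪T u - T (T u), u⟫ := by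
  have h1 := hSpos (T u)
  have h2 := hTpos (u - T u)
  have e2 : T (u - T u) = T u - T (T u) := by simp
  rw [e2] at h2
  have e1 : ⟪T (T u), u⟫ = ⟪T u, T u⟫ := hsym (T u) u
  rw [inner_sub_left] at h1 ⊢
  rw [inner_sub_right, inner_sub_left, inner_sub_left] at h2
  rw [e1] at h2 ⊢
  linarith

/-- `‖u - Tu‖² ≤ ⟪u - Tu, u⟫`. -/
private lemma aux_normsq_le (T : H →L[ℝ] H) (hsym : ∀ u v : H, ⟪T u, v⟫ = ⟪u, T v⟫)
    (hTpos : ∀ u : H, 0 ≤ ⟪T u, u⟫) (hSpos : ∀ u : H, 0 ≤ ⟪u - T u, u⟫) (u : H) :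
    ‖u - T u‖ ^ 2 ≤ ⟪u - T u, u⟫ := by
  have h := aux_pos1 T hsym hTpos hSpos u
  have e : ‖u - T u‖ ^ 2 = ⟪u - T u, u - T u⟫ := (real_inner_self_eq_norm_sq _).symm
  have e1 : ⟪T (T u), u⟫ = ⟪T u, T u⟫ := hsym (T u) u
  rw [e]
  rw [inner_sub_left] at h
  rw [inner_sub_right, inner_sub_left, inner_sub_left]
  rw [e1] at h
  have : ⟪u, T u⟫ = ⟪T u, u⟫ := real_inner_comm _ _
  linarith

/-- Core convergence: powers of a symmetric operator with `0 ≤ T ≤ 1` kill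
the range of `1 - T`. -/
private lemma aux_pow_tendsto_range (T : H →L[ℝ] H)
    (hsym : ∀ u v : H, ⟪T u, v⟫ = ⟪u, T v⟫)
    (hTpos : ∀ u : H, 0 ≤ ⟪T u, u⟫) (hSpos : ∀ u : H, 0 ≤ ⟪u - T u, u⟫) (y : H) :
    Tendsto (fun m : ℕ => (T ^ m) (y - T y)) atTop (𝓝 0) := by
  set a : ℕ → ℝ := fun k => ⟪(T ^ k) y, y⟫ with ha
  have hsymk := aux_pow_sym T hsym
  have haeven : ∀ m, a (m + m) = ⟪(T ^ m) y, (T ^ m) y⟫ := by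
    intro m
    show ⟪(T ^ (m + m)) y, y⟫ = ⟪(T ^ m) y, (T ^ m) y⟫
    have h1 : (T ^ (m + m)) y = (T ^ m) ((T ^ m) y) := by
      rw [pow_add, ContinuousLinearMap.mul_apply]
    rw [h1, hsymk m ((T ^ m) y) y]
  have haodd : ∀ m, a (m + m + 1) = ⟪T ((T ^ m) y), (T ^ m) y⟫ := by
    intro m
    show ⟪(T ^ (m + m + 1)) y, y⟫ = ⟪T ((T ^ m) y), (T ^ m) y⟫
    have h1 : (T ^ (m + m + 1)) y = (T ^ m) ((T ^ m) (T y)) := by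
      rw [pow_succ, pow_add]
      rfl
    rw [h1, hsymk m ((T ^ m) (T y)) y, aux_pow_comm]
  have hnonneg : ∀ k, 0 ≤ a k := by
    intro k
    rcases Nat.even_or_odd k with ⟨m, hm⟩ | ⟨m, hm⟩
    · rw [hm, haeven]; exact real_inner_self_nonneg
    · rw [hm, two_mul, haodd]; exact hTpos _
  have hdiff : ∀ k, a (k + 1) ≤ a k := by
    intro k
    rcases Nat.even_or_odd k with ⟨m, hm⟩ | ⟨m, hm⟩
    · subst hm
      rw [haeven]
      have := hSpos ((T ^ m) y)
      rw [inner_sub_left] at this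
      have ho := haodd m
      linarith
    · rw [two_mul] at hm; subst hm
      have he : a (m + m + 1 + 1) = ⟪T ((T ^ m) y), T ((T ^ m) y)⟫ := by
        have : m + m + 1 + 1 = (m + 1) + (m + 1) := by ring
        rw [this, haeven]
        congr 1 <;>
          rw [pow_succ', ContinuousLinearMap.mul_apply]
      have hp := aux_pos1 T hsym hTpos hSpos ((T ^ m) y)
      rw [inner_sub_left, hsym (T ((T ^ m) y)) ((T ^ m) y)] at hp
      have ho := haodd m
      have : ⟪T ((T ^ m) y), T ((T ^ m) y)⟫ = ⟪(T ^ m) y, T (T ((T ^ m) y))⟫ :=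
        hsym _ _
      rw [he]
      have hc : ⟪(T ^ m) y, T (T ((T ^ m) y))⟫ = ⟪T ((T^m) y), T ((T^m) y)⟫ := this.symm
      linarith [hp, ho, hc]
  have hanti : Antitone a := antitone_nat_of_succ_le hdiff
  have hbdd : BddBelow (Set.range a) := ⟨0, by rintro _ ⟨k, rfl⟩; exact hnonneg k⟩
  have hconv : Tendsto a atTop (𝓝 (⨅ k, a k)) := tendsto_atTop_ciInf hanti hbdd
  have hconv' : Tendsto (fun k => a (k + 1)) atTop (𝓝 (⨅ k, a k)) :=
    (tendsto_add_atTop_iff_nat 1).mpr hconv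
  have hd0 : Tendsto (fun k => a k - a (k + 1)) atTop (𝓝 0) := by
    simpa using hconv.sub hconv'
  -- the even subsequence
  have hdouble : Tendsto (fun m : ℕ => m + m) atTop atTop :=
    tendsto_atTop_atTop_of_monotone (fun i j h => by omega) (fun b => ⟨b, by omega⟩)
  have hd2 : Tendsto (fun m => a (m + m) - a (m + m + 1)) atTop (𝓝 0) :=
    hd0.comp hdouble
  -- squeeze the norms
  have hbound : ∀ m, ‖(T ^ m) (y - T y)‖ ^ 2 ≤ a (m + m) - a (m + m + 1) := by
    intro m
    have he : (T ^ m) (y - T y) = (T ^ m) y - T ((T ^ m) y) := by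
      rw [map_sub, aux_pow_comm]
    rw [he]
    have h1 := aux_normsq_le T hsym hTpos hSpos ((T ^ m) y)
    have h2 : ⟪(T ^ m) y - T ((T ^ m) y), (T ^ m) y⟫ = a (m + m) - a (m + m + 1) := by
      rw [inner_sub_left, haeven m, haodd m]
    linarith
  have hnormsq : Tendsto (fun m => ‖(T ^ m) (y - T y)‖ ^ 2) atTop (𝓝 0) := by
    refine tendsto_of_tendsto_of_tendsto_of_le_of_le tendsto_const_nhds hd2
      (fun m => by positivity) hbound
  rw [tendsto_zero_iff_norm_tendsto_zero]
  have := hnormsq.sqrt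
  simpa [Real.sqrt_sq (norm_nonneg _)] using this

/-- Main abstract convergence theorem. -/
private lemma aux_pow_tendsto_proj (T : H →L[ℝ] H)
    (hsym : ∀ u v : H, ⟪T u, v⟫ = ⟪u, T v⟫)
    (hTpos : ∀ u : H, 0 ≤ ⟪T u, u⟫) (hSpos : ∀ u : H, 0 ≤ ⟪u - T u, u⟫)
    (hnorm : ∀ v : H, ‖T v‖ ≤ ‖v‖)
    (V : Submodule ℝ H) [Submodule.HasOrthogonalProjection V] (hV : ∀ u, u ∈ V ↔ T u = u) (y : H) :
    Tendsto (fun k : ℕ => (T ^ k) y) atTop (𝓝 (Submodule.orthogonalProjection V y : H)) := by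
  set p : H := (Submodule.orthogonalProjection V y : H) with hp
  set w : H := y - p with hw
  have hwV : w ∈ Vᗮ := Submodule.sub_starProjection_mem_orthogonal y
  have hTp : T p = p := (hV p).mp (Submodule.orthogonalProjection V y).2
  have hTkp : ∀ k, (T ^ k) p = p := by
    intro k
    induction k with
    | zero => simp
    | succ n ih => rw [pow_succ, ContinuousLinearMap.mul_apply, hTp, ih]
  have hTknorm : ∀ (k : ℕ) (v : H), ‖(T ^ k) v‖ ≤ ‖v‖ := by
    intro k
    induction k with
    | zero => simp
    | succ n ih =>
      intro v
      rw [pow_succ, ContinuousLinearMap.mul_apply]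
      exact le_trans (ih (T v)) (hnorm v)
  -- the range of 1 - T
  set R : Submodule ℝ H := LinearMap.range ((1 - T : H →L[ℝ] H) : H →ₗ[ℝ] H) with hR
  have hS_apply : ∀ u : H, (1 - T : H →L[ℝ] H) u = u - T u := by intro u; simp
  have hRorth : Rᗮ = V := by
    ext u
    rw [Submodule.mem_orthogonal]
    constructor
    · intro h
      have h' : ∀ v : H, ⟪v - T v, u⟫ = 0 := fun v => h _ ⟨v, hS_apply v⟩
      have h'' : ∀ v : H, ⟪v, u - T u⟫ = 0 := by
        intro v
        have := h' v
        rw [inner_sub_left, hsym] at this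
        rw [inner_sub_right]
        linarith
      have hz : u - T u = 0 := by
        have := h'' (u - T u)
        rwa [inner_self_eq_zero] at this
      rw [hV]
      exact (sub_eq_zero.mp hz).symm
    · intro hu v hv
      obtain ⟨x, rfl⟩ := hv
      have hx : ((1 - T : H →L[ℝ] H) : H →ₗ[ℝ] H) x = x - T x := by simp
      rw [hx, inner_sub_left, hsym, (hV u).mp hu, sub_self]
  have hVorth : Vᗮ = R.topologicalClosure := by
    rw [← hRorth]; exact Submodule.orthogonal_orthogonal_eq_closure R
  have hwcl : w ∈ closure (R : Set H) := by
    rw [hVorth] at hwV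
    exact hwV
  -- T^k w → 0
  have hTw : Tendsto (fun k : ℕ => (T ^ k) w) atTop (𝓝 0) := by
    rw [Metric.tendsto_atTop]
    intro ε hε
    obtain ⟨b, hbR, hb⟩ := Metric.mem_closure_iff.mp hwcl (ε / 2) (by linarith)
    obtain ⟨x, hx⟩ := hbR
    have hcore := aux_pow_tendsto_range T hsym hTpos hSpos x
    rw [Metric.tendsto_atTop] at hcore
    obtain ⟨M, hM⟩ := hcore (ε / 2) (by linarith)
    refine ⟨M, fun k hk => ?_⟩
    rw [dist_eq_norm, sub_zero]
    have h1 : ‖(T ^ k) w‖ ≤ ‖(T ^ k) (w - b)‖ + ‖(T ^ k) b‖ := by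
      have : (T ^ k) w = (T ^ k) (w - b) + (T ^ k) b := by
        rw [← map_add, sub_add_cancel]
      rw [this]; exact norm_add_le _ _
    have h2 : ‖(T ^ k) (w - b)‖ ≤ ‖w - b‖ := hTknorm k _
    have h3 : ‖w - b‖ < ε / 2 := by rwa [← dist_eq_norm]
    have h4 : ‖(T ^ k) b‖ < ε / 2 := by
      have := hM k hk
      rw [dist_eq_norm, sub_zero] at this
      have hb' : b = x - T x := by rw [← hx]; simp
      rwa [hb']
    linarith
  have hdecomp : ∀ k, (T ^ k) y = p + (T ^ k) w := by
    intro k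
    have hy : y = p + w := by rw [hw]; abel
    rw [hy, map_add, hTkp]
  simp only [hdecomp]
  simpa using (tendsto_const_nhds (x := p) (f := atTop)).add hTw

private lemma aux_affine_proj (s : AffineSubspace ℝ H) [Nonempty s]
    [Submodule.HasOrthogonalProjection s.direction] {z : H} (hz : z ∈ s) (x : H) :
    (EuclideanGeometry.orthogonalProjection s x : H) =
      (Submodule.orthogonalProjection s.direction (x - z) : H) + z := by
  have hx : x = (x - z) +ᵥ z := by simp
  conv_lhs => rw [hx]
  rw [ContinuousAffineMap.map_vadd]
  rw [EuclideanGeometry.orthogonalProjection_contLinear]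
  have hz' : EuclideanGeometry.orthogonalProjection s z = ⟨z, hz⟩ := by
    ext
    exact EuclideanGeometry.orthogonalProjection_eq_self_iff.mpr hz
  rw [hz', AffineSubspace.coe_vadd]
  rfl

end Aux

/-- For closed affine subspaces `C₁, …, C_N` with nonempty intersection and
`Q := (1/N)(P_{C₁} + ⋯ + P_{C_N})`, the iterates `Q^k x` converge strongly to
the projection of `x` onto `∩ᵢ Cᵢ`. -/
theorem stmt19 {H : Type*} [NormedAddCommGroup H] [InnerProductSpace ℝ H]
    [CompleteSpace H] {N : ℕ} (hN : 0 < N)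
    (C : Fin N → AffineSubspace ℝ H)
    [∀ i, Nonempty (C i)] [∀ i, Submodule.HasOrthogonalProjection (C i).direction]
    (hcl : ∀ i, IsClosed ((C i : Set H)))
    (z₀ : H) (hz₀ : ∀ i, z₀ ∈ C i)
    [Nonempty (⨅ i, C i : AffineSubspace ℝ H)]
    [Submodule.HasOrthogonalProjection (⨅ i, C i : AffineSubspace ℝ H).direction]
    (Q : H → H)
    (hQ : ∀ x, Q x = (N : ℝ)⁻¹ •
      ∑ i, (EuclideanGeometry.orthogonalProjection (C i) x : H))
    (x : H) :
    Filter.Tendsto (fun k : ℕ => Q^[k] x) Filter.atTop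
      (nhds (EuclideanGeometry.orthogonalProjection (⨅ i, C i) x : H)) := by
  have hNR : (0 : ℝ) < (N : ℝ) := by exact_mod_cast hN
  set K : Fin N → Submodule ℝ H := fun i => (C i).direction with hK
  set P : Fin N → (H →L[ℝ] H) := fun i =>
    (K i).subtypeL.comp (Submodule.orthogonalProjection (K i)) with hP
  have hP_apply : ∀ i u, P i u = (Submodule.orthogonalProjection (K i) u : H) := fun _ _ => rfl
  set T : H →L[ℝ] H := (N : ℝ)⁻¹ • ∑ i, P i with hT
  have hT_apply : ∀ u, T u = (N : ℝ)⁻¹ • ∑ i, (Submodule.orthogonalProjection (K i) u : H) := by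
    intro u
    rw [hT]
    simp [hP_apply]
  -- basic facts about each projection
  have hPsym : ∀ i (u v : H), ⟪P i u, v⟫ = ⟪u, P i v⟫ := by
    intro i u v
    rw [hP_apply, hP_apply]
    exact Submodule.inner_starProjection_left_eq_right (K i) u v
  have hPsq : ∀ i (u : H), ⟪P i u, u⟫ = ‖P i u‖ ^ 2 := by
    intro i u
    have horth : ⟪P i u, u - P i u⟫ = 0 := by
      have hm : u - P i u ∈ (K i)ᗮ := Submodule.sub_starProjection_mem_orthogonal u
      exact (Submodule.mem_orthogonal (K i) _).mp hm _ (Submodule.orthogonalProjection (K i) u).2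
    have : ⟪P i u, u⟫ = ⟪P i u, P i u⟫ := by
      rw [inner_sub_right] at horth
      linarith
    rw [this, real_inner_self_eq_norm_sq]
  have hPle : ∀ i (u : H), ‖P i u‖ ≤ ‖u‖ := by
    intro i u
    have hcs := real_inner_le_norm (P i u) u
    rw [hPsq] at hcs
    rcases eq_or_lt_of_le (norm_nonneg (P i u)) with h | h
    · rw [← h]; exact norm_nonneg u
    · nlinarith
  -- hypotheses of the abstract lemma
  have hsym : ∀ u v : H, ⟪T u, v⟫ = ⟪u, T v⟫ := by
    intro u v
    rw [hT]
    simp only [ContinuousLinearMap.smul_apply, ContinuousLinearMap.sum_apply,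
      real_inner_smul_left, real_inner_smul_right, sum_inner, inner_sum]
    congr 1
    exact Finset.sum_congr rfl fun i _ => hPsym i u v
  have hTinner : ∀ u : H, ⟪T u, u⟫ = (N : ℝ)⁻¹ * ∑ i, ‖P i u‖ ^ 2 := by
    intro u
    rw [hT]
    simp only [ContinuousLinearMap.smul_apply, ContinuousLinearMap.sum_apply,
      real_inner_smul_left, sum_inner]
    congr 1
    exact Finset.sum_congr rfl fun i _ => hPsq i u
  have hTpos : ∀ u : H, 0 ≤ ⟪T u, u⟫ := by
    intro u
    rw [hTinner]
    positivity
  have hsumle : ∀ u : H, ∑ i, ‖P i u‖ ^ 2 ≤ (N : ℝ) * ‖u‖ ^ 2 := by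
    intro u
    calc ∑ i, ‖P i u‖ ^ 2 ≤ ∑ _i : Fin N, ‖u‖ ^ 2 :=
          Finset.sum_le_sum fun i _ => by
            have := hPle i u
            nlinarith [norm_nonneg (P i u)]
      _ = (N : ℝ) * ‖u‖ ^ 2 := by simp [Finset.sum_const, mul_comm]
  have hSpos : ∀ u : H, 0 ≤ ⟪u - T u, u⟫ := by
    intro u
    rw [inner_sub_left, hTinner, real_inner_self_eq_norm_sq]
    have := hsumle u
    have h2 : (N : ℝ)⁻¹ * ∑ i, ‖P i u‖ ^ 2 ≤ ‖u‖ ^ 2 := by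
      rw [inv_mul_le_iff₀ hNR] at *
      · linarith [hsumle u]
    linarith
  have hnorm : ∀ v : H, ‖T v‖ ≤ ‖v‖ := by
    intro v
    rw [hT]
    simp only [ContinuousLinearMap.smul_apply, ContinuousLinearMap.sum_apply]
    rw [norm_smul]
    have h1 : ‖∑ i, P i v‖ ≤ ∑ i, ‖P i v‖ := norm_sum_le _ _
    have h2 : ∑ i, ‖P i v‖ ≤ (N : ℝ) * ‖v‖ := by
      calc ∑ i, ‖P i v‖ ≤ ∑ _i : Fin N, ‖v‖ := Finset.sum_le_sum fun i _ => hPle i v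
        _ = (N : ℝ) * ‖v‖ := by simp [mul_comm]
    have h3 : ‖(N : ℝ)⁻¹‖ = (N : ℝ)⁻¹ := by
      rw [Real.norm_eq_abs, abs_of_pos (by positivity)]
    rw [h3]
    calc (N : ℝ)⁻¹ * ‖∑ i, P i v‖ ≤ (N : ℝ)⁻¹ * ((N : ℝ) * ‖v‖) := by
          apply mul_le_mul_of_nonneg_left (le_trans h1 h2) (by positivity)
      _ = ‖v‖ := by field_simp
  -- the fixed-point space
  set V : Submodule ℝ H := (⨅ i, C i : AffineSubspace ℝ H).direction with hVdef
  have hz₀inf : z₀ ∈ (⨅ i, C i : AffineSubspace ℝ H) := (aux_mem_iInf C z₀).mpr hz₀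
  have hfix_each : ∀ u : H, (∀ i, P i u = u) → T u = u := by
    intro u hu
    rw [hT_apply]
    have : ∀ i : Fin N, (Submodule.orthogonalProjection (K i) u : H) = u := fun i => hu i
    rw [Finset.sum_congr rfl fun i _ => this i, Finset.sum_const]
    simp [Finset.card_univ]
    rw [← Nat.cast_smul_eq_nsmul ℝ, smul_smul, inv_mul_cancel₀ (ne_of_gt hNR), one_smul]
  have hfix_T : ∀ u : H, T u = u → ∀ i, P i u = u := by
    intro u hu i
    have h1 : ⟪T u, u⟫ = ‖u‖ ^ 2 := by rw [hu, real_inner_self_eq_norm_sq]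
    rw [hTinner] at h1
    have hsum : ∑ j, ‖P j u‖ ^ 2 = (N : ℝ) * ‖u‖ ^ 2 := by
      field_simp at h1
      linarith
    have hzero : ∑ j, (‖u‖ ^ 2 - ‖P j u‖ ^ 2) = 0 := by
      rw [Finset.sum_sub_distrib, hsum]
      simp [Finset.sum_const, Finset.card_univ, mul_comm]
    have heach : ∀ j ∈ Finset.univ, (0 : ℝ) ≤ ‖u‖ ^ 2 - ‖P j u‖ ^ 2 := by
      intro j _
      have := hPle j u
      nlinarith [norm_nonneg (P j u)]
    have hj : ‖u‖ ^ 2 - ‖P i u‖ ^ 2 = 0 :=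
      (Finset.sum_eq_zero_iff_of_nonneg heach).mp hzero i (Finset.mem_univ i)
    -- conclude P i u = u
    have hdiff : ⟪u - P i u, u - P i u⟫ = 0 := by
      have horth : ⟪P i u, u - P i u⟫ = 0 := by
        have hm : u - P i u ∈ (K i)ᗮ := Submodule.sub_starProjection_mem_orthogonal u
        exact (Submodule.mem_orthogonal (K i) _).mp hm _ (Submodule.orthogonalProjection (K i) u).2
      have horth' : ⟪u - P i u, P i u⟫ = 0 := by rw [real_inner_comm]; exact horth
      rw [inner_sub_right, horth', sub_zero, inner_sub_left, real_inner_self_eq_norm_sq]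
      have := hPsq i u
      have hcomm : ⟪P i u, u⟫ = ⟪u, P i u⟫ := real_inner_comm _ _
      linarith
    have hPz : u - P i u = 0 := by rwa [inner_self_eq_zero] at hdiff
    exact (sub_eq_zero.mp hPz).symm
  have hVmem : ∀ u : H, u ∈ V ↔ T u = u := by
    intro u
    rw [hVdef, aux_mem_direction hz₀inf, aux_mem_iInf]
    constructor
    · intro h
      apply hfix_each
      intro i
      rw [hP_apply, ← Submodule.starProjection_apply, Submodule.starProjection_eq_self_iff]
      exact (aux_mem_direction (hz₀ i) u).mpr (h i)
    · intro h i
      have hfi := hfix_T u h i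
      rw [hP_apply, ← Submodule.starProjection_apply, Submodule.starProjection_eq_self_iff] at hfi
      exact (aux_mem_direction (hz₀ i) u).mp hfi
  haveI : Submodule.HasOrthogonalProjection V :=
    ‹Submodule.HasOrthogonalProjection (⨅ i, C i : AffineSubspace ℝ H).direction›
  have hmain := aux_pow_tendsto_proj T hsym hTpos hSpos hnorm V hVmem (x - z₀)
  have hbridge : ∀ i (v : H), (EuclideanGeometry.orthogonalProjection (C i) v : H)
      = (Submodule.orthogonalProjection (K i) (v - z₀) : H) + z₀ := fun i v =>
    aux_affine_proj (C i) (hz₀ i) v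
  have hQ' : ∀ v, Q v = T (v - z₀) + z₀ := by
    intro v
    rw [hQ v, hT_apply]
    rw [Finset.sum_congr rfl fun i _ => hbridge i v]
    rw [Finset.sum_add_distrib, Finset.sum_const, Finset.card_univ, Fintype.card_fin, smul_add]
    congr 1
    rw [← Nat.cast_smul_eq_nsmul ℝ, smul_smul, inv_mul_cancel₀ (ne_of_gt hNR), one_smul]
  have hiter : ∀ k, Q^[k] x = (T ^ k) (x - z₀) + z₀ := by
    intro k
    induction k with
    | zero => simp
    | succ n ih =>
      rw [Function.iterate_succ_apply', ih, hQ']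
      congr 1
      rw [add_sub_cancel_right, pow_succ', ContinuousLinearMap.mul_apply]
  have htarget : (EuclideanGeometry.orthogonalProjection (⨅ i, C i) x : H)
      = (Submodule.orthogonalProjection V (x - z₀) : H) + z₀ := aux_affine_proj _ hz₀inf x
  rw [htarget]
  simp only [hiter]
  exact hmain.add tendsto_const_nhds
end
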